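/- arXiv:1605.08013 — 6 statements merged into one kernel-verified Lean document; each statement's English description precedes it below -/
import Mathlib

section
/- Let r ≥ 2 and k ≥ 3 be integers and let F̂ be any r-pattern of the complete graph K_k. Then for every natural number n there exists a complete multipartite graph G on n vertices that is (r,F̂)-extremal, i.e., c_{r,F̂}(G) = c_{r,F̂}(n). -/
open SimpleGraph

/-- A (not necessarily proper) `r`-edge-coloring of a graph `G`, encoded as a symmetric
function on ordered pairs of vertices whose value on non-adjacent pairs is pinned to `0`. -/
def IsEdgeColoring {V : Type*} {r : ℕ} (G : SimpleGraph V) (c : V → V → Fin r) : Prop :=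
  (∀ u v, c u v = c v u) ∧ ∀ u v, ¬ G.Adj u v → (c u v).1 = 0

/-- The coloring `c` of `G` contains a copy of the pattern `p` of the complete graph `K_k`
with all vertices inside the set `A`: there is an injective map `f` of `Fin k` into `A`
whose image is a clique of `G` and such that two edges of the copy get equal colors
exactly when the corresponding edges of `K_k` lie in the same class of the pattern. -/
def ContainsPatternOn {V : Type*} {k r s : ℕ} (G : SimpleGraph V) (A : Set V)
    (p : Fin k → Fin k → Fin s) (c : V → V → Fin r) : Prop :=
  ∃ f : Fin k → V, (∀ i, f i ∈ A) ∧ Function.Injective f ∧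
    (∀ i j, i ≠ j → G.Adj (f i) (f j)) ∧
    ∀ i j i' j', i ≠ j → i' ≠ j' →
      (c (f i) (f j) = c (f i') (f j') ↔ p i j = p i' j')

/-- The coloring `c` of `G` contains a copy of the pattern `p`. -/
def ContainsPattern {V : Type*} {k r s : ℕ} (G : SimpleGraph V)
    (p : Fin k → Fin k → Fin s) (c : V → V → Fin r) : Prop :=
  ContainsPatternOn G Set.univ p c

/-- `c_{r,p}(G)`: the number of `p`-free `r`-edge-colorings of `G`. -/
noncomputable def colCount {V : Type*} {k s : ℕ} (r : ℕ) (p : Fin k → Fin k → Fin s)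
    (G : SimpleGraph V) : ℕ :=
  Nat.card {c : V → V → Fin r // IsEdgeColoring G c ∧ ¬ ContainsPattern G p c}

/-- `G` is a complete multipartite graph: vertices can be partitioned (into the fibers
of some map `f`) so that two vertices are adjacent iff they lie in different parts. -/
def IsCompleteMultipartiteGraph {V : Type*} (G : SimpleGraph V) : Prop :=
  ∃ f : V → V, ∀ u v, G.Adj u v ↔ f u ≠ f v

namespace ErdosAux

variable {n r k : ℕ}

/-- graph minus all edges at `v` -/
def dv (v : Fin n) (H : SimpleGraph (Fin n)) : SimpleGraph (Fin n) where
  Adj x y := H.Adj x y ∧ x ≠ v ∧ y ≠ v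
  symm := ⟨fun x y ⟨h, hx, hy⟩ => ⟨h.symm, hy, hx⟩⟩
  loopless := ⟨fun x ⟨h, _, _⟩ => H.loopless.irrefl x h⟩

lemma dv_adj (v : Fin n) (H : SimpleGraph (Fin n)) (x y : Fin n) :
    (dv v H).Adj x y ↔ H.Adj x y ∧ x ≠ v ∧ y ≠ v := Iff.rfl

section withzero
variable [NeZero r]

def zap (v : Fin n) (c : Fin n → Fin n → Fin r) : Fin n → Fin n → Fin r :=
  fun x y => if x = v ∨ y = v then 0 else c x y

def glue (u : Fin n) (τ : Fin n → Fin n → Fin r) (a : Fin n → Fin r) : Fin n → Fin n → Fin r :=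
  fun x y => if x = u then a y else if y = u then a x else τ x y

def glue2 (u v : Fin n) (τ : Fin n → Fin n → Fin r) (a b : Fin n → Fin r) :
    Fin n → Fin n → Fin r :=
  fun x y => if x = u then a y else if y = u then a x else if x = v then b y
    else if y = v then b x else τ x y

def pin (H : SimpleGraph (Fin n)) (u : Fin n) (a : Fin n → Fin r) : Prop :=
  ∀ x, ¬H.Adj u x → a x = 0

def baseOK (H : SimpleGraph (Fin n)) (u v : Fin n) (τ : Fin n → Fin n → Fin r) : Prop :=
  (∀ x y, τ x y = τ y x) ∧
    ∀ x y, (¬H.Adj x y ∨ x = u ∨ x = v ∨ y = u ∨ y = v) → τ x y = 0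

def Wty (p : Fin k → Fin k → Fin r) (H : SimpleGraph (Fin n)) (u v : Fin n)
    (τ : Fin n → Fin n → Fin r) : Type :=
  {a : Fin n → Fin r // pin H u a ∧ baseOK H u v τ ∧
    ¬ContainsPattern (dv v H) p (glue u τ a)}

instance (p : Fin k → Fin k → Fin r) (H : SimpleGraph (Fin n)) (u v : Fin n)
    (τ : Fin n → Fin n → Fin r) : Finite (Wty p H u v τ) :=
  Subtype.finite

lemma baseOK_comm (H : SimpleGraph (Fin n)) (u v : Fin n) (τ : Fin n → Fin n → Fin r) :
    baseOK H u v τ ↔ baseOK H v u τ := by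
  unfold baseOK; constructor <;> rintro ⟨h1, h2⟩ <;> exact ⟨h1, fun x y h => h2 x y (by tauto)⟩

/-- transfer of pattern containment along an injective graph map -/
lemma contains_map {s : ℕ} {p : Fin k → Fin k → Fin s} {H1 H2 : SimpleGraph (Fin n)}
    {g : Fin n → Fin n} (hg : Function.Injective g)
    (hadj : ∀ x y, H1.Adj x y → H2.Adj (g x) (g y))
    {c1 c2 : Fin n → Fin n → Fin r} (hcol : ∀ x y, H1.Adj x y → c2 (g x) (g y) = c1 x y) :
    ContainsPattern H1 p c1 → ContainsPattern H2 p c2 := by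
  rintro ⟨f, -, hinj, ha, hc⟩
  refine ⟨g ∘ f, fun _ => trivial, hg.comp hinj, fun i j hij => hadj _ _ (ha i j hij),
    fun i j i' j' hij hij' => ?_⟩
  simp only [Function.comp]
  rw [hcol _ _ (ha i j hij), hcol _ _ (ha i' j' hij')]
  exact hc i j i' j' hij hij'

lemma copySplit {p : Fin k → Fin k → Fin r} (hk : 2 ≤ k) (H : SimpleGraph (Fin n))
    {u v : Fin n} (huv : u ≠ v) (hadj : ¬H.Adj u v) (c : Fin n → Fin n → Fin r) :
    ContainsPattern H p c ↔
      ContainsPattern (dv v H) p (zap v c) ∨ ContainsPattern (dv u H) p (zap u c) := by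
  have h01 : (⟨0, by omega⟩ : Fin k) ≠ ⟨1, by omega⟩ := by
    intro h; exact absurd (Fin.mk.injEq .. ▸ h) (by simp)
  constructor
  · rintro ⟨f, -, hinj, hadjf, hcol⟩
    have hcase : (∀ i, f i ≠ v) ∨ (∀ i, f i ≠ u) := by
      by_contra hc
      push_neg at hc
      obtain ⟨⟨i, hi⟩, ⟨j, hj⟩⟩ := hc
      have hij : j ≠ i := fun h => huv (by rw [← hj, h, hi])
      exact hadj (hj ▸ hi ▸ hadjf j i hij)
    rcases hcase with h | h
    · refine Or.inl ⟨f, fun _ => trivial, hinj,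
        fun i j hij => ⟨hadjf i j hij, h i, h j⟩, fun i j i' j' hij hij' => ?_⟩
      simp only [zap, h i, h j, h i', h j', or_self, if_false]
      exact hcol i j i' j' hij hij'
    · refine Or.inr ⟨f, fun _ => trivial, hinj,
        fun i j hij => ⟨hadjf i j hij, h i, h j⟩, fun i j i' j' hij hij' => ?_⟩
      simp only [zap, h i, h j, h i', h j', or_self, if_false]
      exact hcol i j i' j' hij hij'
  · have key : ∀ w : Fin n, ContainsPattern (dv w H) p (zap w c) → ContainsPattern H p c := by
      rintro w ⟨f, -, hinj, hadjf, hcol⟩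
      have hne : ∀ i, f i ≠ w := by
        intro i
        rcases eq_or_ne i ⟨0, by omega⟩ with h | h
        · exact (hadjf i ⟨1, by omega⟩ (h ▸ h01)).2.1
        · exact (hadjf i ⟨0, by omega⟩ h).2.1
      refine ⟨f, fun _ => trivial, hinj, fun i j hij => (hadjf i j hij).1,
        fun i j i' j' hij hij' => ?_⟩
      have hz : ∀ i j : Fin k, zap w c (f i) (f j) = c (f i) (f j) := by
        intro i j; simp [zap, hne i, hne j]
      rw [← hz i j, ← hz i' j']
      exact hcol i j i' j' hij hij'
    rintro (h | h)
    exacts [key v h, key u h]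

end withzero

lemma nat_card_sigma {ι : Type*} [Fintype ι] (f : ι → Type*) [∀ i, Finite (f i)] :
    Nat.card (Σ i, f i) = ∑ i, Nat.card (f i) := by
  letI : ∀ i, Fintype (f i) := fun i => Fintype.ofFinite _
  simp [Nat.card_eq_fintype_card, Fintype.card_sigma]

section withzero2
variable [NeZero r]

lemma fin_zero {x : Fin r} (h : x.1 = 0) : x = 0 := Fin.ext (by simp [h])

lemma ec_glue2 {H : SimpleGraph (Fin n)} {u v : Fin n} {τ : Fin n → Fin n → Fin r}
    {a b : Fin n → Fin r}
    (ha : pin H u a) (hb : pin H v b) (ht : baseOK H u v τ) :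
    IsEdgeColoring H (glue2 u v τ a b) := by
  constructor
  · intro x y
    unfold glue2
    by_cases hxu : x = u <;> by_cases hyu : y = u <;>
      by_cases hxv : x = v <;> by_cases hyv : y = v <;>
      simp_all [ht.1 x y]
  · intro x y hxy
    suffices h : glue2 u v τ a b x y = 0 by rw [h]; simp
    unfold glue2
    by_cases hxu : x = u
    · subst hxu; simp only [if_pos rfl]; exact ha y hxy
    by_cases hyu : y = u
    · subst hyu; simp only [hxu, if_false, if_pos rfl]
      exact ha x (fun h => hxy h.symm)
    by_cases hxv : x = v
    · subst hxv; simp only [hxu, hyu, if_false, if_pos rfl]; exact hb y hxy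
    by_cases hyv : y = v
    · subst hyv; simp only [hxu, hyu, hxv, if_false, if_pos rfl]
      exact hb x (fun h => hxy h.symm)
    · simp only [hxu, hyu, hxv, hyv, if_false]
      exact ht.2 x y (Or.inl hxy)

lemma zapv_glue2 {H : SimpleGraph (Fin n)} {u v : Fin n} (huv : u ≠ v) (hadj : ¬H.Adj u v)
    {τ : Fin n → Fin n → Fin r} {a b : Fin n → Fin r} (ha : pin H u a) (ht : baseOK H u v τ) :
    zap v (glue2 u v τ a b) = glue u τ a := by
  have h1 : ∀ z, τ u z = 0 := fun z => ht.2 _ _ (by tauto)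
  have h2 : ∀ z, τ z u = 0 := fun z => ht.2 _ _ (by tauto)
  have h3 : ∀ z, τ v z = 0 := fun z => ht.2 _ _ (by tauto)
  have h4 : ∀ z, τ z v = 0 := fun z => ht.2 _ _ (by tauto)
  have hav : a v = 0 := ha v hadj
  funext x y
  unfold zap glue2 glue
  by_cases hxu : x = u <;> by_cases hyu : y = u <;> by_cases hxv : x = v <;>
    by_cases hyv : y = v <;> simp_all

lemma zapu_glue2 {H : SimpleGraph (Fin n)} {u v : Fin n} (huv : u ≠ v) (hadj : ¬H.Adj u v)
    {τ : Fin n → Fin n → Fin r} {a b : Fin n → Fin r} (hb : pin H v b) (ht : baseOK H u v τ) :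
    zap u (glue2 u v τ a b) = glue v τ b := by
  have h1 : ∀ z, τ u z = 0 := fun z => ht.2 _ _ (by tauto)
  have h2 : ∀ z, τ z u = 0 := fun z => ht.2 _ _ (by tauto)
  have h3 : ∀ z, τ v z = 0 := fun z => ht.2 _ _ (by tauto)
  have h4 : ∀ z, τ z v = 0 := fun z => ht.2 _ _ (by tauto)
  have hbu : b u = 0 := hb u (fun h => hadj h.symm)
  funext x y
  unfold zap glue2 glue
  by_cases hxu : x = u <;> by_cases hyu : y = u <;> by_cases hxv : x = v <;>
    by_cases hyv : y = v <;> simp_all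

lemma zapu_glue {H : SimpleGraph (Fin n)} {u v : Fin n} {τ : Fin n → Fin n → Fin r}
    {a : Fin n → Fin r} (ht : baseOK H u v τ) : zap u (glue u τ a) = τ := by
  have h1 : ∀ z, τ u z = 0 := fun z => ht.2 _ _ (by tauto)
  have h2 : ∀ z, τ z u = 0 := fun z => ht.2 _ _ (by tauto)
  funext x y
  unfold zap glue
  by_cases hxu : x = u <;> by_cases hyu : y = u <;> simp_all

lemma zapv_glue {H : SimpleGraph (Fin n)} {u v : Fin n} {τ : Fin n → Fin n → Fin r}
    {a : Fin n → Fin r} (ht : baseOK H u v τ) : zap v (glue v τ a) = τ := by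
  have h3 : ∀ z, τ v z = 0 := fun z => ht.2 _ _ (by tauto)
  have h4 : ∀ z, τ z v = 0 := fun z => ht.2 _ _ (by tauto)
  funext x y
  unfold zap glue
  by_cases hxv : x = v <;> by_cases hyv : y = v <;> simp_all

lemma glue2_recover {H : SimpleGraph (Fin n)} {u v : Fin n} {c : Fin n → Fin n → Fin r}
    (hec : IsEdgeColoring H c) :
    glue2 u v (zap u (zap v c)) (fun y => c u y) (fun y => c v y) = c := by
  funext x y
  unfold glue2 zap
  by_cases hxu : x = u <;> by_cases hyu : y = u <;> by_cases hxv : x = v <;>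
    by_cases hyv : y = v <;> simp_all [hec.1 x u, hec.1 x v, hec.1 u v]


lemma baseOK_zap2 {H : SimpleGraph (Fin n)} {u v : Fin n} {c : Fin n → Fin n → Fin r}
    (hec : IsEdgeColoring H c) : baseOK H u v (zap u (zap v c)) := by
  constructor
  · intro x y
    unfold zap
    by_cases hxu : x = u <;> by_cases hyu : y = u <;> by_cases hxv : x = v <;>
      by_cases hyv : y = v <;> simp_all [hec.1 x y]
  · intro x y hor
    unfold zap
    rcases hor with h | h | h | h | h
    · by_cases hxu : x = u <;> by_cases hyu : y = u <;> by_cases hxv : x = v <;>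
        by_cases hyv : y = v <;> simp_all [fin_zero (hec.2 x y h)]
    all_goals simp [h]

lemma glue_row_u {H : SimpleGraph (Fin n)} {u v : Fin n} (huv : u ≠ v) (hadj : ¬H.Adj u v)
    {c : Fin n → Fin n → Fin r} (hec : IsEdgeColoring H c) :
    glue u (zap u (zap v c)) (fun y => c u y) = zap v c := by
  have hcuv : c u v = 0 := fin_zero (hec.2 u v hadj)
  funext x y
  unfold glue zap
  by_cases hxu : x = u <;> by_cases hyu : y = u <;> by_cases hxv : x = v <;>
    by_cases hyv : y = v <;> simp_all [hec.1 x u, hec.1 u v]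

lemma glue_row_v {H : SimpleGraph (Fin n)} {u v : Fin n} (huv : u ≠ v) (hadj : ¬H.Adj u v)
    {c : Fin n → Fin n → Fin r} (hec : IsEdgeColoring H c) :
    glue v (zap u (zap v c)) (fun y => c v y) = zap u c := by
  have hcuv : c u v = 0 := fin_zero (hec.2 u v hadj)
  funext x y
  unfold glue zap
  by_cases hxu : x = u <;> by_cases hyu : y = u <;> by_cases hxv : x = v <;>
    by_cases hyv : y = v <;> simp_all [hec.1 x v, hec.1 u v]

lemma glue2_row_u {u v : Fin n} {τ : Fin n → Fin n → Fin r} {a b : Fin n → Fin r} :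
    (fun y => glue2 u v τ a b u y) = a := by
  funext y; unfold glue2; simp

lemma glue2_row_v {H : SimpleGraph (Fin n)} {u v : Fin n} (huv : u ≠ v) (hadj : ¬H.Adj u v)
    {τ : Fin n → Fin n → Fin r} {a b : Fin n → Fin r}
    (ha : pin H u a) (hb : pin H v b) :
    (fun y => glue2 u v τ a b v y) = b := by
  have hav : a v = 0 := ha v hadj
  have hbu : b u = 0 := hb u (fun h => hadj h.symm)
  funext y
  unfold glue2
  by_cases hyu : y = u <;> simp_all [huv.symm]

lemma split (p : Fin k → Fin k → Fin r) (hk : 2 ≤ k) (H : SimpleGraph (Fin n))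
    {u v : Fin n} (huv : u ≠ v) (hadj : ¬H.Adj u v) :
    Nat.card {c : Fin n → Fin n → Fin r // IsEdgeColoring H c ∧ ¬ContainsPattern H p c} =
      ∑ τ : Fin n → Fin n → Fin r, Nat.card (Wty p H u v τ) * Nat.card (Wty p H v u τ) := by
  classical
  rw [Nat.card_congr (Equiv.sigmaFiberEquiv
      (fun c : {c : Fin n → Fin n → Fin r // IsEdgeColoring H c ∧ ¬ContainsPattern H p c} =>
        zap u (zap v c.1))).symm, nat_card_sigma]
  refine Finset.sum_congr rfl fun τ _ => ?_
  rw [← Nat.card_prod]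
  have hF : ∀ w : Wty p H u v τ × Wty p H v u τ,
      (IsEdgeColoring H (glue2 u v τ w.1.1 w.2.1) ∧
        ¬ContainsPattern H p (glue2 u v τ w.1.1 w.2.1)) := by
    intro w
    refine ⟨ec_glue2 w.1.2.1 w.2.2.1 w.1.2.2.1, fun hcont => ?_⟩
    rcases (copySplit hk H huv hadj _).mp hcont with h | h
    · rw [zapv_glue2 huv hadj w.1.2.1 w.1.2.2.1] at h
      exact w.1.2.2.2 h
    · rw [zapu_glue2 huv hadj w.2.2.1 w.1.2.2.1] at h
      exact w.2.2.2.2 h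
  have hFib : ∀ w : Wty p H u v τ × Wty p H v u τ,
      zap u (zap v (glue2 u v τ w.1.1 w.2.1)) = τ := by
    intro w
    rw [zapv_glue2 huv hadj w.1.2.1 w.1.2.2.1, zapu_glue w.1.2.2.1]
  let F : Wty p H u v τ × Wty p H v u τ →
      {c0 : {c : Fin n → Fin n → Fin r //
          IsEdgeColoring H c ∧ ¬ContainsPattern H p c} // zap u (zap v c0.1) = τ} :=
    fun w => ⟨⟨glue2 u v τ w.1.1 w.2.1, hF w⟩, hFib w⟩
  refine (Nat.card_congr (Equiv.ofBijective F ⟨?_, ?_⟩)).symm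
  · -- injective
    rintro ⟨⟨a, ha⟩, ⟨b, hb⟩⟩ ⟨⟨a', ha'⟩, ⟨b', hb'⟩⟩ hEq
    have hg : glue2 u v τ a b = glue2 u v τ a' b' := by
      have h1 := congrArg (fun z => z.1.1) hEq
      exact h1
    have hA : a = a' := by
      rw [← @glue2_row_u n r _ u v τ a b, ← @glue2_row_u n r _ u v τ a' b', hg]
    have hB : b = b' := by
      rw [← glue2_row_v huv hadj ha.1 hb.1 (τ := τ), ← glue2_row_v huv hadj ha'.1 hb'.1 (τ := τ), hg]
    simp [Prod.ext_iff, Subtype.ext_iff, hA, hB]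
  · -- surjective
    rintro ⟨⟨c, hec, hnc⟩, hfib⟩
    have hbase : baseOK H u v τ := hfib ▸ baseOK_zap2 hec
    have hnc2 : ¬ ContainsPattern (dv v H) p (zap v c) ∧
        ¬ ContainsPattern (dv u H) p (zap u c) := by
      constructor <;> intro h <;>
        exact hnc ((copySplit hk H huv hadj c).mpr (by tauto))
    refine ⟨(⟨fun y => c u y, fun x hx => fin_zero (hec.2 u x hx), hbase, ?_⟩,
      ⟨fun y => c v y, fun x hx => fin_zero (hec.2 v x hx), (baseOK_comm H u v τ).mp hbase, ?_⟩), ?_⟩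
    · rw [← hfib, glue_row_u huv hadj hec]
      exact hnc2.1
    · rw [← hfib, glue_row_v huv hadj hec]
      exact hnc2.2
    · refine Subtype.ext (Subtype.ext ?_)
      show glue2 u v τ (fun y => c u y) (fun y => c v y) = c
      rw [← hfib]
      exact glue2_recover hec

def twinMap (u v : Fin n) : Fin n → Fin n := fun x => if x = v then u else x

omit [NeZero r] in
lemma twin_pin_u {G : SimpleGraph (Fin n)} {u v : Fin n} (huv : u ≠ v) (hadj : ¬G.Adj u v) :
    ∀ x, (G.comap (twinMap u v)).Adj u x ↔ G.Adj u x := by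
  intro x
  rw [SimpleGraph.comap_adj]
  unfold twinMap
  by_cases hxv : x = v <;> simp_all [huv]

lemma twin_baseOK {G : SimpleGraph (Fin n)} {u v : Fin n} (τ : Fin n → Fin n → Fin r) :
    baseOK (G.comap (twinMap u v)) u v τ ↔ baseOK G u v τ := by
  unfold baseOK
  constructor <;> rintro ⟨h1, h2⟩ <;> refine ⟨h1, fun x y h => h2 x y ?_⟩ <;>
  · rw [SimpleGraph.comap_adj] at *
    unfold twinMap at *
    by_cases hxv : x = v <;> by_cases hyv : y = v <;> simp_all <;> tauto

omit [NeZero r] in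
lemma twin_dv {G : SimpleGraph (Fin n)} {u v : Fin n} :
    dv v (G.comap (twinMap u v)) = dv v G := by
  refine SimpleGraph.ext ?_
  ext x y
  show (G.comap (twinMap u v)).Adj x y ∧ x ≠ v ∧ y ≠ v ↔ G.Adj x y ∧ x ≠ v ∧ y ≠ v
  rw [SimpleGraph.comap_adj]
  unfold twinMap
  by_cases hxv : x = v <;> by_cases hyv : y = v <;> simp_all

lemma twin1 (p : Fin k → Fin k → Fin r) {G : SimpleGraph (Fin n)} {u v : Fin n}
    (huv : u ≠ v) (hadj : ¬G.Adj u v) (τ : Fin n → Fin n → Fin r) :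
    Nat.card (Wty p (G.comap (twinMap u v)) u v τ) = Nat.card (Wty p G u v τ) := by
  refine Nat.card_congr (Equiv.subtypeEquivRight fun a => ?_)
  rw [twin_dv]
  constructor
  · rintro ⟨h1, h2, h3⟩
    exact ⟨fun x hx => h1 x (fun h => hx ((twin_pin_u huv hadj x).mp h)),
      (twin_baseOK τ).mp h2, h3⟩
  · rintro ⟨h1, h2, h3⟩
    exact ⟨fun x hx => h1 x (fun h => hx ((twin_pin_u huv hadj x).mpr h)),
      (twin_baseOK τ).mpr h2, h3⟩

lemma twin2 (p : Fin k → Fin k → Fin r) {G : SimpleGraph (Fin n)} {u v : Fin n}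
    (huv : u ≠ v) (hadj : ¬G.Adj u v) (τ : Fin n → Fin n → Fin r) :
    Nat.card (Wty p (G.comap (twinMap u v)) v u τ) = Nat.card (Wty p G u v τ) := by
  have hswap : Function.Injective (Equiv.swap u v) := (Equiv.swap u v).injective
  have hpin : ∀ b : Fin n → Fin r,
      pin (G.comap (twinMap u v)) v b ↔ pin G u b := by
    intro b
    unfold pin
    refine forall_congr' fun x => ?_
    rw [SimpleGraph.comap_adj]
    unfold twinMap
    by_cases hxv : x = v <;> simp_all [huv, huv.symm]
  have hcont : ∀ b : Fin n → Fin r, pin G u b →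
      (ContainsPattern (dv u (G.comap (twinMap u v))) p (glue v τ b) ↔
        ContainsPattern (dv v G) p (glue u τ b)) := by
    intro b hb
    constructor
    · refine contains_map hswap ?_ ?_
      · rintro x y ⟨hxy, hxu, hyu⟩
        rw [SimpleGraph.comap_adj] at hxy
        unfold twinMap at hxy
        have hirr : x ≠ y := fun h => (G.comap (twinMap u v)).loopless.irrefl x (by
          rw [SimpleGraph.comap_adj]; unfold twinMap; exact h ▸ hxy)
        by_cases hxv : x = v <;> by_cases hyv : y = v <;>
          simp_all [dv_adj, Equiv.swap_apply_def]
      · rintro x y ⟨hxy, hxu, hyu⟩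
        rw [SimpleGraph.comap_adj] at hxy
        unfold twinMap at hxy
        unfold glue
        by_cases hxv : x = v <;> by_cases hyv : y = v <;>
          simp_all [Equiv.swap_apply_def, huv, huv.symm]
    · refine contains_map hswap ?_ ?_
      · rintro x y ⟨hxy, hxv, hyv⟩
        have hxy' : x ≠ y := fun h => G.loopless.irrefl x (h ▸ hxy)
        by_cases hxu : x = u <;> by_cases hyu : y = u <;>
          simp_all [dv_adj, SimpleGraph.comap_adj, twinMap, Equiv.swap_apply_def, huv, huv.symm]
      · rintro x y ⟨hxy, hxv, hyv⟩
        unfold glue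
        by_cases hxu : x = u <;> by_cases hyu : y = u <;>
          simp_all [Equiv.swap_apply_def, huv, huv.symm]
  refine Nat.card_congr (Equiv.subtypeEquivRight fun b => ?_)
  constructor
  · rintro ⟨h1, h2, h3⟩
    have h1' := (hpin b).mp h1
    refine ⟨h1', (twin_baseOK τ).mp ((baseOK_comm _ u v τ).mpr h2), fun h => h3 ?_⟩
    exact (hcont b h1').mpr h
  · rintro ⟨h1, h2, h3⟩
    refine ⟨(hpin b).mpr h1, (baseOK_comm _ u v τ).mp ((twin_baseOK τ).mpr h2), fun h => h3 ?_⟩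
    exact (hcont b h1).mp h

end withzero2

open Classical in
noncomputable def dgr (H : SimpleGraph (Fin n)) (x : Fin n) : ℕ :=
  ∑ y, if H.Adj x y then 1 else 0

open Classical in
noncomputable def rr (G : SimpleGraph (Fin n)) (u v : Fin n) (x : Fin n) : ℕ :=
  ∑ y, if G.Adj x (twinMap u v y) then 1 else 0

noncomputable def eS (H : SimpleGraph (Fin n)) : ℕ := ∑ x, dgr H x
noncomputable def qS (H : SimpleGraph (Fin n)) : ℕ := ∑ x, dgr H x * dgr H x

open Classical in
lemma dgr_le (H : SimpleGraph (Fin n)) (x : Fin n) : dgr H x ≤ n := by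
  unfold dgr
  calc (∑ y, if H.Adj x y then 1 else 0) ≤ ∑ _y : Fin n, 1 :=
        Finset.sum_le_sum (fun y _ => by split <;> omega)
  _ = n := by simp

lemma eS_le (H : SimpleGraph (Fin n)) : eS H ≤ n * n := by
  calc eS H ≤ ∑ _x : Fin n, n := Finset.sum_le_sum (fun x _ => dgr_le H x)
  _ = n * n := by simp [Finset.sum_const, mul_comm]

lemma qS_le (H : SimpleGraph (Fin n)) : qS H ≤ n * (n * n) := by
  calc qS H ≤ ∑ _x : Fin n, n * n :=
    Finset.sum_le_sum (fun x _ => Nat.mul_le_mul (dgr_le H x) (dgr_le H x))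
  _ = n * (n * n) := by simp [Finset.sum_const, mul_comm]

lemma dgr_comap (G : SimpleGraph (Fin n)) (u v : Fin n) (x : Fin n) :
    dgr (G.comap (twinMap u v)) x = rr G u v (twinMap u v x) := by
  classical
  unfold dgr rr
  refine Finset.sum_congr rfl fun y _ => ?_
  refine if_congr ?_ rfl rfl
  exact SimpleGraph.comap_adj

lemma twinMap_eq_self {u v y : Fin n} (h : y ≠ v) : twinMap u v y = y := by
  unfold twinMap; simp [h]

lemma twinMap_v (u v : Fin n) : twinMap u v v = u := by unfold twinMap; simp

open Classical in
lemma rr_eq (G : SimpleGraph (Fin n)) (u v : Fin n) (x : Fin n) :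
    rr G u v x + (if G.Adj x v then 1 else 0) = dgr G x + (if G.Adj x u then 1 else 0) := by
  unfold rr dgr
  rw [← Finset.sum_erase_add _ _ (Finset.mem_univ v),
      ← Finset.sum_erase_add _ _ (Finset.mem_univ v)]
  have h1 : ∑ y ∈ Finset.univ.erase v, (if G.Adj x (twinMap u v y) then 1 else 0) =
      ∑ y ∈ Finset.univ.erase v, (if G.Adj x y then 1 else 0) := by
    refine Finset.sum_congr rfl fun y hy => ?_
    rw [twinMap_eq_self (Finset.mem_erase.mp hy).1]
  rw [h1, twinMap_v]
  omega

lemma rr_v (G : SimpleGraph (Fin n)) {u v : Fin n} (hadj : ¬G.Adj u v) :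
    rr G u v v = dgr G v := by
  have h := rr_eq G u v v
  rw [if_neg (G.loopless.irrefl v), if_neg (fun h' : G.Adj v u => hadj h'.symm)] at h
  omega

lemma rr_u (G : SimpleGraph (Fin n)) {u v : Fin n} (hadj : ¬G.Adj u v) :
    rr G u v u = dgr G u := by
  have h := rr_eq G u v u
  rw [if_neg hadj, if_neg (G.loopless.irrefl u)] at h
  omega

lemma sum_twin (u v : Fin n) (F : Fin n → ℕ) :
    ∑ x, F (twinMap u v x) + F v = ∑ x, F x + F u := by
  classical
  rw [← Finset.sum_erase_add Finset.univ (fun x => F (twinMap u v x)) (Finset.mem_univ v),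
      ← Finset.sum_erase_add Finset.univ F (Finset.mem_univ v)]
  have h1 : ∑ y ∈ Finset.univ.erase v, F (twinMap u v y) = ∑ y ∈ Finset.univ.erase v, F y := by
    refine Finset.sum_congr rfl fun y hy => ?_
    rw [twinMap_eq_self (Finset.mem_erase.mp hy).1]
  rw [h1, twinMap_v]
  omega

open Classical in
lemma col_sum (G : SimpleGraph (Fin n)) (v : Fin n) :
    (∑ x, if G.Adj x v then 1 else 0) = dgr G v := by
  unfold dgr
  refine Finset.sum_congr rfl fun x _ => ?_
  refine if_congr ⟨fun h => h.symm, fun h => h.symm⟩ rfl rfl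

lemma eS_comap (G : SimpleGraph (Fin n)) {u v : Fin n} (hadj : ¬G.Adj u v) :
    eS (G.comap (twinMap u v)) + 2 * dgr G v = eS G + 2 * dgr G u := by
  classical
  have h0 : eS (G.comap (twinMap u v)) = ∑ x, rr G u v (twinMap u v x) := by
    unfold eS
    exact Finset.sum_congr rfl fun x _ => dgr_comap G u v x
  have h1 := sum_twin u v (rr G u v)
  have h2 : ∑ x, rr G u v x + dgr G v = eS G + dgr G u := by
    have hsum : (∑ x, (rr G u v x + if G.Adj x v then 1 else 0)) =
        ∑ x, (dgr G x + if G.Adj x u then 1 else 0) :=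
      Finset.sum_congr rfl fun x _ => rr_eq G u v x
    rw [Finset.sum_add_distrib, Finset.sum_add_distrib, col_sum G v, col_sum G u] at hsum
    unfold eS
    omega
  have h3 := rr_v G hadj
  have h4 := rr_u G hadj
  omega

lemma qS_comap (G : SimpleGraph (Fin n)) {u v : Fin n} (hadj : ¬G.Adj u v) :
    qS (G.comap (twinMap u v)) + dgr G v * dgr G v
      = (∑ x, rr G u v x * rr G u v x) + dgr G u * dgr G u := by
  classical
  have h0 : qS (G.comap (twinMap u v)) = ∑ x, rr G u v (twinMap u v x) * rr G u v (twinMap u v x) := by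
    unfold qS
    refine Finset.sum_congr rfl fun x _ => ?_
    rw [dgr_comap G u v x]
  have h1 := sum_twin u v (fun z => rr G u v z * rr G u v z)
  have h3 := rr_v G hadj
  have h4 := rr_u G hadj
  rw [h3, h4] at h1
  rw [h0]
  exact h1

lemma min'_eq_of_eq {α : Type*} [LinearOrder α] {s t : Finset α} (h : s = t)
    (hs : s.Nonempty) : s.min' hs = t.min' (h ▸ hs) := by subst h; rfl

lemma multipartite_of_trans (G : SimpleGraph (Fin n))
    (htrans : ∀ a b c : Fin n, (a = b ∨ ¬G.Adj a b) → (b = c ∨ ¬G.Adj b c) →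
      (a = c ∨ ¬G.Adj a c)) :
    IsCompleteMultipartiteGraph G := by
  classical
  set R : Fin n → Fin n → Prop := fun a b => a = b ∨ ¬G.Adj a b with hR
  have hsymm : ∀ a b, R a b → R b a := by
    rintro a b (rfl | h)
    · exact Or.inl rfl
    · exact Or.inr (fun h' => h h'.symm)
  have hne : ∀ v : Fin n, (Finset.univ.filter (fun x => R v x)).Nonempty :=
    fun v => ⟨v, by simp [hR]⟩
  refine ⟨fun v => (Finset.univ.filter (fun x => R v x)).min' (hne v), fun a b => ?_⟩
  have hmem : ∀ v, R v ((Finset.univ.filter (fun x => R v x)).min' (hne v)) := by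
    intro v
    have := Finset.min'_mem _ (hne v)
    exact (Finset.mem_filter.mp this).2
  have hclass : ∀ a b, R a b →
      (Finset.univ.filter (fun x => R a x)) = (Finset.univ.filter (fun x => R b x)) := by
    intro a b hab
    ext x
    simp only [Finset.mem_filter, Finset.mem_univ, true_and]
    exact ⟨fun h => htrans b a x (hsymm a b hab) h, fun h => htrans a b x hab h⟩
  constructor
  · intro hAdj hfeq
    have h1 := hmem a
    have h2 := hmem b
    rw [show (Finset.univ.filter (fun x => R a x)).min' (hne a)
        = (Finset.univ.filter (fun x => R b x)).min' (hne b) from hfeq] at h1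
    have hab : R a b := htrans a _ b h1 (hsymm b _ h2)
    rcases hab with rfl | h
    · exact G.loopless.irrefl a hAdj
    · exact h hAdj
  · intro hfne
    by_contra hAdj
    have : R a b := Or.inr hAdj
    have hcl := hclass a b this
    exact hfne (min'_eq_of_eq hcl (hne a))

lemma lex_lt1 {a b ea qa CE CQ : ℕ} (hea : ea < CE) (hqa : qa < CQ) (h : a < b) (eb qb : ℕ) :
    (a * CE + ea) * CQ + qa < (b * CE + eb) * CQ + qb := by
  have h1 : (a * CE + ea) * CQ + qa < (a * CE + ea + 1) * CQ := by
    have := Nat.succ_le_of_lt hqa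
    nlinarith
  have h2 : (a * CE + ea + 1) * CQ ≤ (b * CE + eb) * CQ := by
    have hb : a + 1 ≤ b := h
    have : a * CE + ea + 1 ≤ b * CE + eb := by nlinarith
    exact Nat.mul_le_mul_right _ this
  omega

lemma lex_lt2 {a ea eb qa qb CE CQ : ℕ} (hqa : qa < CQ) (h : ea < eb) :
    (a * CE + ea) * CQ + qa < (a * CE + eb) * CQ + qb := by
  have h1 : (a * CE + ea) * CQ + qa < (a * CE + ea + 1) * CQ := by nlinarith
  have h2 : (a * CE + ea + 1) * CQ ≤ (a * CE + eb) * CQ :=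
    Nat.mul_le_mul_right _ (by omega)
  omega

lemma amgm (a b : ℕ) : 2 * (a * b) ≤ a * a + b * b := by
  zify
  nlinarith [sq_nonneg ((a : ℤ) - b)]

lemma amgm2 (a b d : ℕ) (h : a + b = 2 * d) : 2 * (d * d) ≤ a * a + b * b := by
  have hz : (a : ℤ) + b = 2 * d := by exact_mod_cast h
  zify
  nlinarith [sq_nonneg ((a : ℤ) - b)]

lemma amgm2strict (a b d : ℕ) (ha : a + 1 = d) (hb : b = d + 1) :
    2 * (d * d) < a * a + b * b := by
  have hz : (a : ℤ) + 1 = d := by exact_mod_cast ha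
  have hz' : (b : ℤ) = d + 1 := by exact_mod_cast hb
  zify
  nlinarith


end ErdosAux

open ErdosAux in
/-- For any `r ≥ 2`, `k ≥ 3`, any `r`-pattern of `K_k` (a partition of the edges of `K_k`
into at most `r` classes, encoded by a symmetric class map `p`), and any `n`, there is a
complete multipartite graph on `n` vertices that is `(r,p)`-extremal. -/
theorem statement0 (r k : ℕ) (hr : 2 ≤ r) (hk : 3 ≤ k)
    (p : Fin k → Fin k → Fin r) (hpsymm : ∀ i j, p i j = p j i) (n : ℕ) :
    ∃ G : SimpleGraph (Fin n), IsCompleteMultipartiteGraph G ∧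
      ∀ H : SimpleGraph (Fin n), colCount r p H ≤ colCount r p G := by
  classical
  haveI : NeZero r := ⟨by omega⟩
  have hk2 : 2 ≤ k := by omega
  haveI : Finite (SimpleGraph (Fin n)) :=
    Finite.of_injective (fun G => G.Adj) (fun G H h => SimpleGraph.ext h)
  haveI : Nonempty (SimpleGraph (Fin n)) := ⟨⊥⟩
  obtain ⟨G, hG⟩ := Finite.exists_max (fun H : SimpleGraph (Fin n) =>
    (colCount r p H * (n * n + 1) + eS H) * (n * (n * n) + 1) + qS H)
  have heb : ∀ H : SimpleGraph (Fin n), eS H < n * n + 1 := fun H => by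
    have := eS_le H; omega
  have hqb : ∀ H : SimpleGraph (Fin n), qS H < n * (n * n) + 1 := fun H => by
    have := qS_le H; omega
  have hmax : ∀ H : SimpleGraph (Fin n), colCount r p H ≤ colCount r p G := by
    intro H
    by_contra hlt
    push_neg at hlt
    exact absurd (hG H) (Nat.not_le.mpr (lex_lt1 (heb G) (hqb G) hlt _ _))
  have hEmax : ∀ H : SimpleGraph (Fin n), colCount r p H = colCount r p G → eS H ≤ eS G := by
    intro H hc
    by_contra hlt
    push_neg at hlt
    have h2 := lex_lt2 (a := colCount r p G) (ea := eS G) (eb := eS H) (qa := qS G)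
      (qb := qS H) (CE := n * n + 1) (CQ := n * (n * n) + 1) (hqb G) hlt
    have hWH := hG H
    rw [hc] at hWH
    exact absurd hWH (Nat.not_le.mpr h2)
  have hQmax : ∀ H : SimpleGraph (Fin n), colCount r p H = colCount r p G → eS H = eS G → qS H ≤ qS G := by
    intro H hc he
    have hWH := hG H
    rw [hc, he] at hWH
    omega
  refine ⟨G, ?_, hmax⟩
  apply multipartite_of_trans
  by_contra htr
  push_neg at htr
  obtain ⟨a, b, c, hab, hbc, hac⟩ := htr
  -- rename: u := b (center), v := a, w := c
  have hvw : a ≠ c := hac.1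
  have hAvw : G.Adj a c := hac.2
  have huv : b ≠ a := by
    rintro rfl
    rcases hbc with rfl | h
    · exact hvw rfl
    · exact h hAvw
  have huw : b ≠ c := by
    rintro rfl
    rcases hab with rfl | h
    · exact hvw rfl
    · exact h hAvw
  have hnadj : ¬G.Adj b a := by
    rcases hab with h | h
    · exact absurd h.symm huv
    · exact fun h' => h h'.symm
  have hnadj' : ¬G.Adj a b := fun h => hnadj h.symm
  have hnadjw : ¬G.Adj b c := by
    rcases hbc with h | h
    · exact absurd h huw
    · exact h
  set u := b with hu
  set v := a with hv
  set w := c with hw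
  have hG'nadj : ¬(G.comap (twinMap u v)).Adj u v := by
    rw [SimpleGraph.comap_adj, twinMap_eq_self huv, twinMap_v]
    exact G.loopless.irrefl u
  have hG''nadj : ¬(G.comap (twinMap v u)).Adj v u := by
    rw [SimpleGraph.comap_adj, twinMap_eq_self huv.symm, twinMap_v]
    exact G.loopless.irrefl v
  set X : (Fin n → Fin n → Fin r) → ℕ := fun τ => Nat.card (Wty p G u v τ) with hX
  set Y : (Fin n → Fin n → Fin r) → ℕ := fun τ => Nat.card (Wty p G v u τ) with hY
  have hc1 : colCount r p G = ∑ τ : Fin n → Fin n → Fin r, X τ * Y τ :=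
    split p hk2 G huv hnadj
  have hc2 : colCount r p (G.comap (twinMap u v)) = ∑ τ : Fin n → Fin n → Fin r, X τ * X τ := by
    rw [show colCount r p (G.comap (twinMap u v)) = _ from
      split p hk2 (G.comap (twinMap u v)) huv hG'nadj]
    refine Finset.sum_congr rfl fun τ _ => ?_
    rw [twin1 p huv hnadj τ, twin2 p huv hnadj τ]
  have hc3 : colCount r p (G.comap (twinMap v u)) = ∑ τ : Fin n → Fin n → Fin r, Y τ * Y τ := by
    rw [show colCount r p (G.comap (twinMap v u)) = _ from
      split p hk2 (G.comap (twinMap v u)) huv.symm hG''nadj]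
    refine Finset.sum_congr rfl fun τ _ => ?_
    rw [twin1 p huv.symm hnadj' τ, twin2 p huv.symm hnadj' τ]
  have h2ab : 2 * colCount r p G ≤
      colCount r p (G.comap (twinMap u v)) + colCount r p (G.comap (twinMap v u)) := by
    rw [hc1, hc2, hc3, Finset.mul_sum, ← Finset.sum_add_distrib]
    exact Finset.sum_le_sum fun τ _ => amgm (X τ) (Y τ)
  have hcG' : colCount r p (G.comap (twinMap u v)) = colCount r p G := by
    have := hmax (G.comap (twinMap u v)); have := hmax (G.comap (twinMap v u)); omega
  have hcG'' : colCount r p (G.comap (twinMap v u)) = colCount r p G := by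
    have := hmax (G.comap (twinMap u v)); have := hmax (G.comap (twinMap v u)); omega
  -- edge sums
  have hEa : eS (G.comap (twinMap u v)) + 2 * dgr G v = eS G + 2 * dgr G u := eS_comap G hnadj
  have hEb : eS (G.comap (twinMap v u)) + 2 * dgr G u = eS G + 2 * dgr G v := eS_comap G hnadj'
  have hE1 : eS (G.comap (twinMap u v)) ≤ eS G := hEmax _ hcG'
  have hE2 : eS (G.comap (twinMap v u)) ≤ eS G := hEmax _ hcG''
  have hduv : dgr G u = dgr G v := by omega
  have hE1' : eS (G.comap (twinMap u v)) = eS G := by omega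
  have hE2' : eS (G.comap (twinMap v u)) = eS G := by omega
  -- square sums
  have hQa := qS_comap G hnadj
  have hQb := qS_comap G hnadj'
  rw [hduv] at hQa
  rw [hduv] at hQb
  have hQ1 : qS (G.comap (twinMap u v)) = ∑ x, rr G u v x * rr G u v x := by omega
  have hQ2 : qS (G.comap (twinMap v u)) = ∑ x, rr G v u x * rr G v u x := by omega
  have hptwise : ∀ z : Fin n,
      2 * (dgr G z * dgr G z) ≤ rr G u v z * rr G u v z + rr G v u z * rr G v u z := by
    intro z
    have e1 := rr_eq G u v z
    have e2 := rr_eq G v u z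
    refine amgm2 _ _ _ ?_
    omega
  have hstrict : 2 * (dgr G w * dgr G w) <
      rr G u v w * rr G u v w + rr G v u w * rr G v u w := by
    have e1 := rr_eq G u v w
    have e2 := rr_eq G v u w
    rw [if_pos hAvw.symm, if_neg (fun h : G.Adj w u => hnadjw h.symm)] at e1
    rw [if_neg (fun h : G.Adj w u => hnadjw h.symm), if_pos hAvw.symm] at e2
    exact amgm2strict _ _ _ (by omega) (by omega)
  have hsum : 2 * qS G <
      (∑ x, rr G u v x * rr G u v x) + ∑ x, rr G v u x * rr G v u x := by
    have := Finset.sum_lt_sum (f := fun z => 2 * (dgr G z * dgr G z))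
      (g := fun z => rr G u v z * rr G u v z + rr G v u z * rr G v u z)
      (fun z _ => hptwise z) ⟨w, Finset.mem_univ w, hstrict⟩
    rw [← Finset.mul_sum] at this
    rw [Finset.sum_add_distrib] at this
    exact this
  have hQ1' : qS (G.comap (twinMap u v)) ≤ qS G := hQmax _ hcG' hE1'
  have hQ2' : qS (G.comap (twinMap v u)) ≤ qS G := hQmax _ hcG'' hE2'
  omega
end

section
/- Let F̂ be an r-pattern of K_k, let H be an induced subgraph of a graph G such that S = V(G) − V(H) is an independent set in G, and let Ĥ be an F̂-free r-edge-coloring of H. Then c(G | Ĥ) = ∏_{v∈S} c(v, Ĥ). -/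
open SimpleGraph

/-- `c(G | Ĥ)`: the number of ways to extend the `p`-free coloring `c0` of the subgraph of
`G` induced on `A` to a `p`-free `r`-edge-coloring of all of `G`. -/
noncomputable def condCount {V : Type*} {k s : ℕ} (r : ℕ) (p : Fin k → Fin k → Fin s)
    (G : SimpleGraph V) (A : Set V) (c0 : V → V → Fin r) : ℕ :=
  Nat.card {c : V → V → Fin r // IsEdgeColoring G c ∧ ¬ ContainsPattern G p c ∧
    ∀ x y, x ∈ A → y ∈ A → c x y = c0 x y}

/-- `c(v, Ĥ)`: the number of ways to color the edges of `G` between the vertex `v` and `A`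
so that the resulting coloring of the subgraph of `G` induced on `A ∪ {v}` (extending the
coloring `c0` of the part induced on `A`) is `p`-free. -/
noncomputable def vertExtCount {V : Type*} {k s : ℕ} (r : ℕ) (p : Fin k → Fin k → Fin s)
    (G : SimpleGraph V) (A : Set V) (v : V) (c0 : V → V → Fin r) : ℕ :=
  Nat.card {c : V → V → Fin r //
    (∀ x y, c x y = c y x) ∧
    (∀ x y, ¬ (G.Adj x y ∧ x ∈ insert v A ∧ y ∈ insert v A) → (c x y).1 = 0) ∧
    (∀ x y, x ∈ A → y ∈ A → c x y = c0 x y) ∧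
    ¬ ContainsPatternOn G (insert v A) p c}

/-- If `H` is the subgraph of `G` induced on `A`, the complement `S = V(G) - A` is an
independent set, and `c0` is a `p`-free `r`-edge-coloring of `H`, then
`c(G | Ĥ) = ∏_{v ∈ S} c(v, Ĥ)`. -/
theorem statement3 {V : Type*} [Fintype V] [DecidableEq V] (r k : ℕ) (hr : 2 ≤ r) (hk : 3 ≤ k)
    (p : Fin k → Fin k → Fin r) (hpsymm : ∀ i j, p i j = p j i)
    (G : SimpleGraph V) (A : Finset V)
    (hind : ∀ u v : V, u ∉ A → v ∉ A → ¬ G.Adj u v)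
    (c0 : V → V → Fin r)
    (hc0symm : ∀ x y, c0 x y = c0 y x)
    (hc0supp : ∀ x y, ¬ (G.Adj x y ∧ x ∈ A ∧ y ∈ A) → (c0 x y).1 = 0)
    (hc0free : ¬ ContainsPatternOn G (↑A) p c0) :
    condCount r p G (↑A) c0 = ∏ v ∈ Aᶜ, vertExtCount r p G (↑A) v c0 := by
  classical
  haveI : NeZero r := ⟨by omega⟩
  have hz : ∀ a : Fin r, a.1 = 0 → a = 0 := fun a h => Fin.ext (by simpa using h)
  -- restriction of a coloring to `insert v A`
  let res : (V → V → Fin r) → V → (V → V → Fin r) := fun c v x y =>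
    if x ∈ insert v (↑A : Set V) ∧ y ∈ insert v (↑A : Set V) then c x y else 0
  -- gluing a family of colorings indexed by `Aᶜ`
  let glue : (∀ v : {x // x ∈ Aᶜ}, V → V → Fin r) → V → V → Fin r := fun cf x y =>
    if hx : x ∈ A then
      (if hy : y ∈ A then c0 x y else cf ⟨y, Finset.mem_compl.mpr hy⟩ x y)
    else cf ⟨x, Finset.mem_compl.mpr hx⟩ x y
  unfold condCount vertExtCount
  rw [← Finset.prod_coe_sort, ← Nat.card_pi]
  apply Nat.card_congr
  refine
    { toFun := fun c v => ⟨res c.1 v.1, ?_, ?_, ?_, ?_⟩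
      invFun := fun cf => ⟨glue (fun v => (cf v).1), ?_, ?_, ?_⟩
      left_inv := ?_
      right_inv := ?_ }
  · -- res symmetric
    intro x y
    obtain ⟨⟨hs, _⟩, _, _⟩ := c.2
    simp only [res]
    by_cases h : x ∈ insert (v : V) (↑A : Set V) ∧ y ∈ insert (v : V) (↑A : Set V)
    · rw [if_pos h, if_pos ⟨h.2, h.1⟩, hs]
    · rw [if_neg h, if_neg (fun h' => h ⟨h'.2, h'.1⟩)]
  · -- res support
    intro x y h
    obtain ⟨⟨_, hsupp⟩, _, _⟩ := c.2
    simp only [res]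
    by_cases hm : x ∈ insert (v : V) (↑A : Set V) ∧ y ∈ insert (v : V) (↑A : Set V)
    · rw [if_pos hm]
      exact hsupp x y (fun hadj => h ⟨hadj, hm⟩)
    · rw [if_neg hm]; simp
  · -- res agrees with c0
    intro x y hx hy
    obtain ⟨_, _, hagree⟩ := c.2
    simp only [res]
    rw [if_pos ⟨Set.mem_insert_of_mem _ hx, Set.mem_insert_of_mem _ hy⟩]
    exact hagree x y hx hy
  · -- res pattern-free
    rintro ⟨f, hfA, hinj, hadj, hcol⟩
    obtain ⟨_, hfree, _⟩ := c.2
    refine hfree ⟨f, fun i => Set.mem_univ _, hinj, hadj, ?_⟩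
    intro i j i' j' hij hij'
    have e1 : res c.1 v.1 (f i) (f j) = c.1 (f i) (f j) := by
      simp only [res]; rw [if_pos ⟨hfA i, hfA j⟩]
    have e2 : res c.1 v.1 (f i') (f j') = c.1 (f i') (f j') := by
      simp only [res]; rw [if_pos ⟨hfA i', hfA j'⟩]
    rw [← e1, ← e2]
    exact hcol i j i' j' hij hij'
  · -- glue is an edge coloring
    constructor
    · intro x y
      simp only [glue]
      by_cases hx : x ∈ A <;> by_cases hy : y ∈ A
      · simp [hx, hy, hc0symm x y]
      · simp only [dif_pos hx, dif_neg hy]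
        exact ((cf ⟨y, Finset.mem_compl.mpr hy⟩).2.1 x y)
      · simp only [dif_neg hx, dif_pos hy]
        exact ((cf ⟨x, Finset.mem_compl.mpr hx⟩).2.1 x y).symm ▸
          ((cf ⟨x, Finset.mem_compl.mpr hx⟩).2.1 x y)
      · simp only [dif_neg hx, dif_neg hy]
        have h1 := (cf ⟨x, Finset.mem_compl.mpr hx⟩).2.2.1 x y
          (fun h => hind x y hx hy h.1)
        have h2 := (cf ⟨y, Finset.mem_compl.mpr hy⟩).2.2.1 y x
          (fun h => hind y x hy hx h.1)
        rw [hz _ h1, hz _ h2]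
    · intro x y hadj
      simp only [glue]
      by_cases hx : x ∈ A <;> by_cases hy : y ∈ A
      · simp only [dif_pos hx, dif_pos hy]
        exact hc0supp x y (fun h => hadj h.1)
      · simp only [dif_pos hx, dif_neg hy]
        exact (cf ⟨y, Finset.mem_compl.mpr hy⟩).2.2.1 x y (fun h => hadj h.1)
      · simp only [dif_neg hx]
        exact (cf ⟨x, Finset.mem_compl.mpr hx⟩).2.2.1 x y (fun h => hadj h.1)
      · simp only [dif_neg hx]
        exact (cf ⟨x, Finset.mem_compl.mpr hx⟩).2.2.1 x y (fun h => hadj h.1)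
  · -- glue is pattern-free
    rintro ⟨f, -, hinj, hadj, hcol⟩
    have hone : ∀ i j, i ≠ j → f i ∈ A ∨ f j ∈ A := by
      intro i j hij
      by_contra h
      push_neg at h
      exact hind _ _ h.1 h.2 (hadj i j hij)
    by_cases hall : ∀ i, f i ∈ A
    · refine hc0free ⟨f, fun i => hall i, hinj, hadj, ?_⟩
      intro i j i' j' hij hij'
      have e : ∀ a b : Fin k, glue (fun v => (cf v).1) (f a) (f b) = c0 (f a) (f b) := by
        intro a b; simp only [glue]; rw [dif_pos (hall a), dif_pos (hall b)]
      rw [← e i j, ← e i' j']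
      exact hcol i j i' j' hij hij'
    · push_neg at hall
      obtain ⟨i0, hi0⟩ := hall
      set v : {x // x ∈ Aᶜ} := ⟨f i0, Finset.mem_compl.mpr hi0⟩ with hv
      have hmemA : ∀ i, i ≠ i0 → f i ∈ A := by
        intro i hi
        rcases hone i i0 hi with h | h
        · exact h
        · exact absurd h hi0
      have hmem : ∀ i, f i ∈ insert (f i0) (↑A : Set V) := by
        intro i
        by_cases h : i = i0
        · rw [h]; exact Set.mem_insert _ _
        · exact Set.mem_insert_of_mem _ (hmemA i h)
      have hcc : ∀ a b : Fin k, a ≠ b →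
          glue (fun v => (cf v).1) (f a) (f b) = (cf v).1 (f a) (f b) := by
        intro a b hab
        simp only [glue]
        by_cases ha : f a ∈ A
        · rw [dif_pos ha]
          by_cases hb : f b ∈ A
          · rw [dif_pos hb]
            exact ((cf v).2.2.2.1 (f a) (f b) (Finset.mem_coe.mpr ha)
              (Finset.mem_coe.mpr hb)).symm
          · rw [dif_neg hb]
            have hbi0 : b = i0 := by
              by_contra h
              exact hb (hmemA b h)
            subst hbi0
            rfl
        · rw [dif_neg ha]
          have hai0 : a = i0 := by
            by_contra h
            exact ha (hmemA a h)
          subst hai0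
          rfl
      refine (cf v).2.2.2.2 ⟨f, hmem, hinj, hadj, ?_⟩
      intro i j i' j' hij hij'
      rw [← hcc i j hij, ← hcc i' j' hij']
      exact hcol i j i' j' hij hij'
  · -- glue agrees with c0
    intro x y hx hy
    simp only [glue]
    rw [dif_pos (Finset.mem_coe.mp hx), dif_pos (Finset.mem_coe.mp hy)]
  · -- left inverse
    intro c
    apply Subtype.ext
    funext x y
    obtain ⟨⟨hs, hsupp⟩, _, hagree⟩ := c.2
    simp only [glue, res]
    by_cases hx : x ∈ A
    · rw [dif_pos hx]
      by_cases hy : y ∈ A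
      · rw [dif_pos hy]
        exact (hagree x y (Finset.mem_coe.mpr hx) (Finset.mem_coe.mpr hy)).symm
      · rw [dif_neg hy]
        rw [if_pos ⟨Set.mem_insert_of_mem _ hx, Set.mem_insert _ _⟩]
    · rw [dif_neg hx]
      by_cases hy : y ∈ insert x (↑A : Set V)
      · rw [if_pos ⟨Set.mem_insert _ _, hy⟩]
      · rw [if_neg (fun h => hy h.2)]
        have : y ∉ A := fun h => hy (Set.mem_insert_of_mem _ h)
        exact (hz _ (hsupp x y (hind x y hx this))).symm
  · -- right inverse
    intro cf
    funext v
    apply Subtype.ext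
    funext x y
    obtain ⟨qs, qsupp, qagree, qfree⟩ := (cf v).2
    have hvA : (v : V) ∉ A := Finset.mem_compl.mp v.2
    simp only [res, glue]
    by_cases hm : x ∈ insert (v : V) (↑A : Set V) ∧ y ∈ insert (v : V) (↑A : Set V)
    · rw [if_pos hm]
      by_cases hx : x ∈ A
      · rw [dif_pos hx]
        by_cases hy : y ∈ A
        · rw [dif_pos hy]
          exact (qagree x y (Finset.mem_coe.mpr hx) (Finset.mem_coe.mpr hy)).symm
        · rw [dif_neg hy]
          have hyv : y = (v : V) := by
            rcases hm.2 with h | h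
            · exact h
            · exact absurd h hy
          subst hyv
          rfl
      · rw [dif_neg hx]
        have hxv : x = (v : V) := by
          rcases hm.1 with h | h
          · exact h
          · exact absurd h hx
        subst hxv
        rfl
    · rw [if_neg hm]
      exact (hz _ (qsupp x y (fun h => hm ⟨h.2.1, h.2.2⟩))).symm
end

section
/- Let F̂ be an r-pattern of K_k and let G be an (r,F̂)-extremal graph on n vertices. If u, v ∈ V(G) are non-adjacent vertices, then the graph obtained from G by deleting v and adding a new vertex that is a twin of u (non-adjacent to u and adjacent exactly to the neighbors of u) is also an (r,F̂)-extremal graph on n vertices. -/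
open SimpleGraph

/-- `G` is `(r,p)`-extremal: it admits at least as many `p`-free `r`-edge-colorings as any
graph on the same number of vertices. -/
def IsExtremalGraph {V : Type*} [Fintype V] {k s : ℕ} (r : ℕ)
    (p : Fin k → Fin k → Fin s) (G : SimpleGraph V) : Prop :=
  ∀ H : SimpleGraph (Fin (Fintype.card V)), colCount r p H ≤ colCount r p G

set_option linter.unusedSectionVars false

namespace Statement6Aux

variable {V : Type*} {r k : ℕ}

/-- Relabelling invariance of `colCount`. -/
lemma colCount_congr {W : Type*} (e : V ≃ W) (p : Fin k → Fin k → Fin r)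
    (G₁ : SimpleGraph V) (G₂ : SimpleGraph W)
    (h : ∀ x y, G₂.Adj (e x) (e y) ↔ G₁.Adj x y) :
    colCount r p G₂ = colCount r p G₁ := by
  have hadj : ∀ x y : W, G₂.Adj x y ↔ G₁.Adj (e.symm x) (e.symm y) := by
    intro x y
    conv_lhs => rw [← e.apply_symm_apply x, ← e.apply_symm_apply y]
    exact h _ _
  let Φ : (V → V → Fin r) ≃ (W → W → Fin r) :=
    Equiv.arrowCongr e (Equiv.arrowCongr e (Equiv.refl (Fin r)))
  have hΦ : ∀ (c : V → V → Fin r) (x y : W), Φ c x y = c (e.symm x) (e.symm y) := by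
    intro c x y; rfl
  have hpat : ∀ c, ContainsPattern G₁ p c ↔ ContainsPattern G₂ p (Φ c) := by
    intro c
    constructor
    · rintro ⟨f, -, hinj, hadjf, hcol⟩
      refine ⟨fun i => e (f i), fun i => Set.mem_univ _, e.injective.comp hinj,
        fun i j hij => (h (f i) (f j)).2 (hadjf i j hij), ?_⟩
      intro i j i' j' hij hij'
      simp only [hΦ, e.symm_apply_apply]
      exact hcol i j i' j' hij hij'
    · rintro ⟨g, -, hinj, hadjg, hcol⟩
      refine ⟨fun i => e.symm (g i), fun i => Set.mem_univ _, e.symm.injective.comp hinj,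
        fun i j hij => (hadj (g i) (g j)).1 (hadjg i j hij), ?_⟩
      intro i j i' j' hij hij'
      have := hcol i j i' j' hij hij'
      simpa only [hΦ] using this
  refine (Nat.card_congr (Equiv.subtypeEquiv Φ ?_)).symm
  intro c
  have hcolor : IsEdgeColoring G₁ c ↔ IsEdgeColoring G₂ (Φ c) := by
    constructor
    · rintro ⟨hsym, hpin⟩
      exact ⟨fun x y => by simp [hΦ, hsym (e.symm x) (e.symm y)],
        fun x y hxy => by simp only [hΦ]; exact hpin _ _ (fun hc => hxy ((hadj x y).2 hc))⟩
    · rintro ⟨hsym, hpin⟩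
      constructor
      · intro x y
        have := hsym (e x) (e y)
        simpa [hΦ] using this
      · intro x y hxy
        have := hpin (e x) (e y) (fun hc => hxy ((h x y).1 hc))
        simpa [hΦ] using this
  rw [hcolor, hpat]

section Main

variable (p : Fin k → Fin k → Fin r) (G : SimpleGraph V) (u v : V)

/-- The graph on `V` which agrees with `G` outside `{u, v}`, where the neighbourhood of `u`
is `s` and the neighbourhood of `v` is `t` (and `u, v` are non-adjacent). -/
def Hg (s t : Set V) : SimpleGraph V where
  Adj x y := x ≠ y ∧ ((x ≠ u ∧ x ≠ v ∧ y ≠ u ∧ y ≠ v ∧ G.Adj x y) ∨ (x = u ∧ y ∈ s) ∨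
      (y = u ∧ x ∈ s) ∨ (x = v ∧ y ∈ t) ∨ (y = v ∧ x ∈ t))
  symm := by
    constructor
    rintro x y ⟨h1, h2⟩
    refine ⟨h1.symm, ?_⟩
    rcases h2 with ⟨a1, a2, a3, a4, hh⟩ | hh | hh | hh | hh
    · exact Or.inl ⟨a3, a4, a1, a2, hh.symm⟩
    · exact Or.inr (Or.inr (Or.inl hh))
    · exact Or.inr (Or.inl hh)
    · exact Or.inr (Or.inr (Or.inr (Or.inr hh)))
    · exact Or.inr (Or.inr (Or.inr (Or.inl hh)))
  loopless := ⟨fun x h => h.1 rfl⟩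

lemma Hg_adj (s t : Set V) (x y : V) : (Hg G u v s t).Adj x y ↔
    x ≠ y ∧ ((x ≠ u ∧ x ≠ v ∧ y ≠ u ∧ y ≠ v ∧ G.Adj x y) ∨ (x = u ∧ y ∈ s) ∨
      (y = u ∧ x ∈ s) ∨ (x = v ∧ y ∈ t) ∨ (y = v ∧ x ∈ t)) := Iff.rfl

lemma Hg_swap (s t : Set V) : Hg G u v s t = Hg G v u t s := by
  ext x y
  simp only [Hg_adj]
  constructor <;> rintro ⟨h1, h2⟩ <;> exact ⟨h1, by tauto⟩

lemma Hg_adj_of_ne_v {s : Set V} (t : Set V) {x y : V} (hx : x ≠ v) (hy : y ≠ v) :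
    (Hg G u v s t).Adj x y ↔ (Hg G u v s ∅).Adj x y := by
  simp only [Hg_adj, Set.mem_empty_iff_false]
  constructor <;> rintro ⟨h1, h2⟩ <;> exact ⟨h1, by tauto⟩

lemma Hg_adj_of_ne_u {t : Set V} (s : Set V) {x y : V} (hx : x ≠ u) (hy : y ≠ u) :
    (Hg G u v s t).Adj x y ↔ (Hg G u v ∅ t).Adj x y := by
  simp only [Hg_adj, Set.mem_empty_iff_false]
  constructor <;> rintro ⟨h1, h2⟩ <;> exact ⟨h1, by tauto⟩

lemma Hg_not_adj_uv {s t : Set V} (hsv : v ∉ s) (hut : u ∉ t) (huv : u ≠ v) :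
    ¬ (Hg G u v s t).Adj u v := by
  rintro ⟨h1, h2⟩
  tauto

variable [NeZero r]

open scoped Classical in
/-- Overwrite the colors of all edges at `w₀` by `a`. -/
noncomputable def mix (w₀ : V) (b : V → V → Fin r) (a : V → Fin r) : V → V → Fin r :=
  fun x y => if x = w₀ then a y else if y = w₀ then a x else b x y

/-- A "core" coloring: symmetric, supported on the edges of `G - u - v`. -/
def IsBase (b : V → V → Fin r) : Prop :=
  (∀ x y, b x y = b y x) ∧
    ∀ x y, ¬(G.Adj x y ∧ x ≠ u ∧ x ≠ v ∧ y ≠ u ∧ y ≠ v) → b x y = 0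

/-- An attachment supported on `s`. -/
def AttP (s : Set V) (a : V → Fin r) : Prop := ∀ y, y ∉ s → a y = 0

def FreeU (s : Set V) (b : V → V → Fin r) (a : V → Fin r) : Prop :=
  ¬ ContainsPatternOn (Hg G u v s ∅) {x | x ≠ v} p (mix u b a)

def FreeV (t : Set V) (b : V → V → Fin r) (a : V → Fin r) : Prop :=
  ¬ ContainsPatternOn (Hg G u v ∅ t) {x | x ≠ u} p (mix v b a)

noncomputable def Xc (s : Set V) (b : V → V → Fin r) : ℕ :=
  Nat.card {a : V → Fin r // AttP s a ∧ FreeU p G u v s b a}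

open scoped Classical in
noncomputable def wgt (s : Set V) (b : V → V → Fin r) : ℕ :=
  if IsBase G u v b then Xc p G u v s b else 0

lemma swap_imp (s : Set V) (huv : u ≠ v) (b : V → V → Fin r) (a : V → Fin r)
    (h : ContainsPatternOn (Hg G u v ∅ s) {x | x ≠ u} p (mix v b a)) :
    ContainsPatternOn (Hg G u v s ∅) {x | x ≠ v} p (mix u b a) := by
  classical
  obtain ⟨f, hmem, hinj, hadj, hcol⟩ := h
  have hmem' : ∀ i, f i ≠ u := fun i => hmem i
  set g : Fin k → V := fun i => if f i = v then u else f i with hg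
  have hgv : ∀ i, g i ≠ v := by
    intro i
    simp only [hg]
    split
    · exact huv
    · assumption
  have hcolor : ∀ i j, i ≠ j → mix u b a (g i) (g j) = mix v b a (f i) (f j) := by
    intro i j hij
    have hfij : f i ≠ f j := fun e => hij (hinj e)
    by_cases h1 : f i = v
    · have h2 : f j ≠ v := fun e => hfij (h1.trans e.symm)
      simp [hg, mix, h1, h2]
    · by_cases h2 : f j = v
      · simp [hg, mix, h1, h2, hmem' i]
      · simp [hg, mix, h1, h2, hmem' i, hmem' j]
  refine ⟨g, fun i => hgv i, ?_, ?_, ?_⟩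
  · intro i j hgij
    by_cases h1 : f i = v <;> by_cases h2 : f j = v
    · exact hinj (h1.trans h2.symm)
    · exfalso
      simp only [hg, if_pos h1, if_neg h2] at hgij
      exact hmem' j hgij.symm
    · exfalso
      simp only [hg, if_neg h1, if_pos h2] at hgij
      exact hmem' i hgij
    · simp only [hg, if_neg h1, if_neg h2] at hgij
      exact hinj hgij
  · intro i j hij
    have h0 := hadj i j hij
    have hfij : f i ≠ f j := fun e => hij (hinj e)
    rw [Hg_adj] at h0
    obtain ⟨hne, hd⟩ := h0
    simp only [Set.mem_empty_iff_false, and_false, false_and, false_or] at hd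
    by_cases h1 : f i = v
    · have h2 : f j ≠ v := fun e => hfij (h1.trans e.symm)
      have hs : f j ∈ s := by tauto
      have egi : g i = u := by simp [hg, h1]
      have egj : g j = f j := by simp [hg, h2]
      rw [Hg_adj, egi, egj]
      exact ⟨fun e => hmem' j e.symm, Or.inr (Or.inl ⟨rfl, hs⟩)⟩
    · by_cases h2 : f j = v
      · have hs : f i ∈ s := by tauto
        have egi : g i = f i := by simp [hg, h1]
        have egj : g j = u := by simp [hg, h2]
        rw [Hg_adj, egi, egj]
        exact ⟨hmem' i, Or.inr (Or.inr (Or.inl ⟨rfl, hs⟩))⟩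
      · have hd1 : f i ≠ u ∧ f i ≠ v ∧ f j ≠ u ∧ f j ≠ v ∧ G.Adj (f i) (f j) := by tauto
        have egi : g i = f i := by simp [hg, h1]
        have egj : g j = f j := by simp [hg, h2]
        rw [Hg_adj, egi, egj]
        exact ⟨hne, Or.inl hd1⟩
  · intro i j i' j' hij hij'
    rw [hcolor i j hij, hcolor i' j' hij']
    exact hcol i j i' j' hij hij'

lemma free_swap {s : Set V} (huv : u ≠ v) (b : V → V → Fin r) (a : V → Fin r) :
    FreeV p G u v s b a ↔ FreeU p G u v s b a := by
  constructor
  · intro h hc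
    refine h ?_
    have := swap_imp p G v u s huv.symm b a (by rw [Hg_swap G v u ∅ s]; exact hc)
    rwa [Hg_swap G v u s ∅] at this
  · intro h hc
    exact h (swap_imp p G u v s huv b a hc)

/-- Combine a core `b` with attachments `au` at `u` and `av` at `v`. -/
noncomputable def cmb (b : V → V → Fin r) (au av : V → Fin r) : V → V → Fin r :=
  mix u (mix v b av) au

lemma cmb_off_u {b : V → V → Fin r} {au av : V → Fin r} {x y : V}
    (hx : x ≠ u) (hy : y ≠ u) : cmb u v b au av x y = mix v b av x y := by
  simp [cmb, mix, hx, hy]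

lemma cmb_off_v {b : V → V → Fin r} {au av : V → Fin r} {x y : V}
    (hx : x ≠ v) (hy : y ≠ v) : cmb u v b au av x y = mix u b au x y := by
  by_cases hxu : x = u
  · simp [cmb, mix, hxu]
  · by_cases hyu : y = u <;> simp [cmb, mix, hxu, hyu, hx, hy]

lemma fin_val_zero {z : Fin r} (h : z = 0) : z.1 = 0 := by simp [h]

lemma fin_zero_of_val {z : Fin r} (h : z.1 = 0) : z = 0 := by
  apply Fin.ext; simp [h]

lemma cmb_coloring {s t : Set V} (hsu : u ∉ s) (hsv : v ∉ s) (hut : u ∉ t) (hvt : v ∉ t)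
    (huv : u ≠ v) {b : V → V → Fin r} {au av : V → Fin r}
    (hb : IsBase G u v b) (hau : AttP s au) (hav : AttP t av) :
    IsEdgeColoring (Hg G u v s t) (cmb u v b au av) := by
  constructor
  · intro x y
    by_cases hxu : x = u <;> by_cases hyu : y = u <;>
      by_cases hxv : x = v <;> by_cases hyv : y = v <;>
      simp_all [cmb, mix, hb.1 x y]
  · intro x y hnadj
    apply fin_val_zero
    rw [Hg_adj] at hnadj
    by_cases hxu : x = u
    · subst hxu
      have hys : y ∉ s := by
        intro hy
        exact hnadj ⟨fun e => hsu (e ▸ hy), Or.inr (Or.inl ⟨rfl, hy⟩)⟩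
      simp [cmb, mix, hau y hys]
    · by_cases hyu : y = u
      · subst hyu
        have hxs : x ∉ s := by
          intro hx
          exact hnadj ⟨fun e => hsu (e.symm ▸ hx), Or.inr (Or.inr (Or.inl ⟨rfl, hx⟩))⟩
        simp [cmb, mix, hxu, hau x hxs]
      · by_cases hxv : x = v
        · subst hxv
          have hyt : y ∉ t := by
            intro hy
            exact hnadj ⟨fun e => hvt (e ▸ hy), Or.inr (Or.inr (Or.inr (Or.inl ⟨rfl, hy⟩)))⟩
          simp [cmb, mix, hxu, hyu, hav y hyt]
        · by_cases hyv : y = v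
          · subst hyv
            have hxt : x ∉ t := by
              intro hx
              exact hnadj
                ⟨fun e => hvt (e.symm ▸ hx), Or.inr (Or.inr (Or.inr (Or.inr ⟨rfl, hx⟩)))⟩
            simp [cmb, mix, hxu, hyu, hxv, hav x hxt]
          · have : ¬(G.Adj x y ∧ x ≠ u ∧ x ≠ v ∧ y ≠ u ∧ y ≠ v) := by
              rintro ⟨hadj, -⟩
              exact hnadj ⟨hadj.ne, Or.inl ⟨hxu, hxv, hyu, hyv, hadj⟩⟩
            simp [cmb, mix, hxu, hyu, hxv, hyv, hb.2 x y this]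

lemma cmb_free {s t : Set V} (hsu : u ∉ s) (hsv : v ∉ s) (hut : u ∉ t) (hvt : v ∉ t)
    (huv : u ≠ v) (b : V → V → Fin r) (au av : V → Fin r) :
    ¬ ContainsPattern (Hg G u v s t) p (cmb u v b au av) ↔
      FreeU p G u v s b au ∧ FreeV p G u v t b av := by
  rw [show (FreeU p G u v s b au ∧ FreeV p G u v t b av) ↔
      ¬(ContainsPatternOn (Hg G u v s ∅) {x | x ≠ v} p (mix u b au) ∨
        ContainsPatternOn (Hg G u v ∅ t) {x | x ≠ u} p (mix v b av)) by
    rw [not_or]; rfl]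
  apply not_congr
  constructor
  · rintro ⟨f, -, hinj, hadj, hcol⟩
    by_cases hv : ∃ i, f i = v
    · obtain ⟨i0, hi0⟩ := hv
      have hmu : ∀ i, f i ≠ u := by
        intro i hi
        have hii0 : i ≠ i0 := fun e => huv (by rw [← hi, e, hi0])
        have := hadj i i0 hii0
        rw [hi, hi0] at this
        exact Hg_not_adj_uv G u v hsv hut huv this
      refine Or.inr ⟨f, fun i => hmu i, hinj, ?_, ?_⟩
      · intro i j hij
        rw [← Hg_adj_of_ne_u G u v s (hmu i) (hmu j)]
        exact hadj i j hij
      · intro i j i' j' hij hij'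
        have hfij : ∀ i j : Fin k, i ≠ j → cmb u v b au av (f i) (f j) =
            mix v b av (f i) (f j) := fun i j hij => cmb_off_u u v (hmu i) (hmu j)
        rw [← hfij i j hij, ← hfij i' j' hij']
        exact hcol i j i' j' hij hij'
    · push_neg at hv
      refine Or.inl ⟨f, fun i => hv i, hinj, ?_, ?_⟩
      · intro i j hij
        rw [← Hg_adj_of_ne_v G u v t (hv i) (hv j)]
        exact hadj i j hij
      · intro i j i' j' hij hij'
        have hfij : ∀ i j : Fin k, i ≠ j → cmb u v b au av (f i) (f j) =
            mix u b au (f i) (f j) := fun i j hij => cmb_off_v u v (hv i) (hv j)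
        rw [← hfij i j hij, ← hfij i' j' hij']
        exact hcol i j i' j' hij hij'
  · rintro (⟨f, hmem, hinj, hadj, hcol⟩ | ⟨f, hmem, hinj, hadj, hcol⟩)
    · refine ⟨f, fun i => Set.mem_univ _, hinj, ?_, ?_⟩
      · intro i j hij
        rw [Hg_adj_of_ne_v G u v t (hmem i) (hmem j)]
        exact hadj i j hij
      · intro i j i' j' hij hij'
        rw [cmb_off_v u v (hmem i) (hmem j), cmb_off_v u v (hmem i') (hmem j')]
        exact hcol i j i' j' hij hij'
    · refine ⟨f, fun i => Set.mem_univ _, hinj, ?_, ?_⟩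
      · intro i j hij
        rw [Hg_adj_of_ne_u G u v s (hmem i) (hmem j)]
        exact hadj i j hij
      · intro i j i' j' hij hij'
        rw [cmb_off_u u v (hmem i) (hmem j), cmb_off_u u v (hmem i') (hmem j')]
        exact hcol i j i' j' hij hij'

open scoped Classical in
noncomputable def baseOf (c : V → V → Fin r) : V → V → Fin r :=
  fun x y => if x = u ∨ y = u ∨ x = v ∨ y = v then 0 else c x y

open scoped Classical in
noncomputable def attOf (w₀ : V) (c : V → V → Fin r) : V → Fin r :=
  fun y => if y = u ∨ y = v then 0 else c w₀ y

lemma extract_cmb {s t : Set V} (hsv : v ∉ s) (hut : u ∉ t) (huv : u ≠ v)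
    {c : V → V → Fin r} (hc : IsEdgeColoring (Hg G u v s t) c) :
    cmb u v (baseOf u v c) (attOf u v u c) (attOf u v v c) = c := by
  have h0 : ∀ x y, ¬ (Hg G u v s t).Adj x y → c x y = 0 := fun x y h =>
    fin_zero_of_val (hc.2 x y h)
  have huu : c u u = 0 := h0 u u (Hg G u v s t).irrefl
  have hcv : c u v = 0 := h0 u v (Hg_not_adj_uv G u v hsv hut huv)
  have hvu : c v u = 0 := by rw [hc.1 v u]; exact hcv
  have hvv : c v v = 0 := h0 v v (Hg G u v s t).irrefl
  funext x y
  by_cases hxu : x = u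
  · by_cases hyu : y = u
    · simp [cmb, mix, attOf, hxu, hyu, huu]
    · by_cases hyv : y = v
      · simp [cmb, mix, attOf, hxu, hyv, hcv]
      · simp [cmb, mix, attOf, hxu, hyu, hyv]
  · by_cases hyu : y = u
    · by_cases hxv : x = v
      · simp [cmb, mix, attOf, hxu, hyu, hxv, hvu, huv, Ne.symm huv]
      · simp [cmb, mix, attOf, hxu, hyu, hxv]
        exact hc.1 u x
    · by_cases hxv : x = v
      · by_cases hyv : y = v
        · simp [cmb, mix, attOf, hxv, hyv, hvv, huv, Ne.symm huv]
        · simp [cmb, mix, attOf, hxu, hyu, hxv, hyv, huv, Ne.symm huv]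
      · by_cases hyv : y = v
        · simp [cmb, mix, attOf, hxu, hyu, hxv, hyv, huv, Ne.symm huv]
          exact hc.1 v x
        · simp [cmb, mix, baseOf, hxu, hyu, hxv, hyv]

lemma baseOf_cmb {b : V → V → Fin r} {au av : V → Fin r} (hb : IsBase G u v b) :
    baseOf u v (cmb u v b au av) = b := by
  classical
  funext x y
  by_cases h : x = u ∨ y = u ∨ x = v ∨ y = v
  · rw [baseOf, if_pos h]
    symm
    apply hb.2
    tauto
  · push_neg at h
    obtain ⟨h1, h2, h3, h4⟩ := h
    simp [baseOf, cmb, mix, h1, h2, h3, h4]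

lemma attOfu_cmb {s : Set V} (hsu : u ∉ s) (hsv : v ∉ s) {b : V → V → Fin r}
    {au av : V → Fin r} (hau : AttP s au) : attOf u v u (cmb u v b au av) = au := by
  classical
  funext y
  by_cases hyu : y = u
  · simp [attOf, hyu, (hau u hsu).symm]
  · by_cases hyv : y = v
    · simp [attOf, hyu, hyv, (hau v hsv).symm]
    · simp [attOf, cmb, mix, hyu, hyv]

lemma attOfv_cmb {t : Set V} (hut : u ∉ t) (hvt : v ∉ t) (huv : u ≠ v) {b : V → V → Fin r}
    {au av : V → Fin r} (hav : AttP t av) : attOf u v v (cmb u v b au av) = av := by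
  classical
  funext y
  by_cases hyu : y = u
  · simp [attOf, hyu, (hav u hut).symm]
  · by_cases hyv : y = v
    · simp [attOf, hyu, hyv, (hav v hvt).symm]
    · simp [attOf, cmb, mix, hyu, hyv, huv, Ne.symm huv]

lemma card_sigma' {α : Type*} [Fintype α] (F : α → Type*) [∀ a, Finite (F a)] :
    Nat.card (Σ a, F a) = ∑ a, Nat.card (F a) := by
  letI : ∀ a, Fintype (F a) := fun a => Fintype.ofFinite (F a)
  simp [Nat.card_eq_fintype_card]

lemma decomp [Fintype V] [DecidableEq V] (s t : Set V) (hsu : u ∉ s) (hsv : v ∉ s)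
    (hut : u ∉ t) (hvt : v ∉ t) (huv : u ≠ v) :
    colCount r p (Hg G u v s t) =
      ∑ b : V → V → Fin r, wgt p G u v s b * wgt p G u v t b := by
  classical
  let Q : (V → V → Fin r) → ((V → Fin r) × (V → Fin r)) → Prop := fun b y =>
    IsBase G u v b ∧ (AttP s y.1 ∧ FreeU p G u v s b y.1) ∧
      (AttP t y.2 ∧ FreeV p G u v t b y.2)
  have E1 : {c : V → V → Fin r //
      IsEdgeColoring (Hg G u v s t) c ∧ ¬ ContainsPattern (Hg G u v s t) p c} ≃
      {x : (V → V → Fin r) × ((V → Fin r) × (V → Fin r)) // Q x.1 x.2} := by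
    refine
      { toFun := fun c => ⟨(baseOf u v c.1, attOf u v u c.1, attOf u v v c.1), ?_⟩
        invFun := fun x => ⟨cmb u v x.1.1 x.1.2.1 x.1.2.2, ?_⟩
        left_inv := ?_
        right_inv := ?_ }
    · obtain ⟨c, hc, hfree⟩ := c
      have hb : IsBase G u v (baseOf u v c) := by
        constructor
        · intro x y
          simp only [baseOf]
          split_ifs with h1 h2 <;> first | rfl | tauto | exact hc.1 x y
        · intro x y hcond
          simp only [baseOf]
          split_ifs with h1
          · rfl
          · push_neg at h1
            apply fin_zero_of_val
            apply hc.2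
            rw [Hg_adj]
            rintro ⟨hne, hd⟩
            tauto
      have hau : AttP s (attOf u v u c) := by
        intro y hys
        simp only [attOf]
        split_ifs with h1
        · rfl
        · push_neg at h1
          apply fin_zero_of_val
          apply hc.2
          rw [Hg_adj]
          rintro ⟨hne, hd⟩
          tauto
      have hav : AttP t (attOf u v v c) := by
        intro y hyt
        simp only [attOf]
        split_ifs with h1
        · rfl
        · push_neg at h1
          apply fin_zero_of_val
          apply hc.2
          rw [Hg_adj]
          rintro ⟨hne, hd⟩
          tauto
      have hcmb := extract_cmb G u v hsv hut huv hc
      rw [← hcmb] at hfree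
      have hfuv := (cmb_free p G u v hsu hsv hut hvt huv _ _ _).mp hfree
      exact ⟨hb, ⟨hau, hfuv.1⟩, ⟨hav, hfuv.2⟩⟩
    · obtain ⟨⟨b, au, av⟩, hb, ⟨hau, hfu⟩, ⟨hav, hfv⟩⟩ := x
      exact ⟨cmb_coloring G u v hsu hsv hut hvt huv hb hau hav,
        (cmb_free p G u v hsu hsv hut hvt huv b au av).mpr ⟨hfu, hfv⟩⟩
    · rintro ⟨c, hc, hfree⟩
      exact Subtype.ext (extract_cmb G u v hsv hut huv hc)
    · rintro ⟨⟨b, au, av⟩, hb, ⟨hau, hfu⟩, ⟨hav, hfv⟩⟩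
      apply Subtype.ext
      simp only
      rw [baseOf_cmb G u v hb, attOfu_cmb u v hsu hsv hau, attOfv_cmb u v hut hvt huv hav]
  rw [colCount, Nat.card_congr E1,
    Nat.card_congr (Equiv.subtypeProdEquivSigmaSubtype Q), card_sigma']
  refine Finset.sum_congr rfl fun b _ => ?_
  by_cases hb : IsBase G u v b
  · have e2 : {y : (V → Fin r) × (V → Fin r) // Q b y} ≃
        {au : V → Fin r // AttP s au ∧ FreeU p G u v s b au} ×
          {av : V → Fin r // AttP t av ∧ FreeV p G u v t b av} :=
      (Equiv.subtypeEquivRight (fun y => by simp [Q, hb])).trans Equiv.subtypeProdEquivProd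
    have e3 : {av : V → Fin r // AttP t av ∧ FreeV p G u v t b av} ≃
        {a : V → Fin r // AttP t a ∧ FreeU p G u v t b a} :=
      Equiv.subtypeEquivRight fun a =>
        and_congr_right fun _ => free_swap p G u v huv b a
    rw [Nat.card_congr e2, Nat.card_prod, Nat.card_congr e3]
    simp [wgt, hb, Xc]
  · have : IsEmpty {y : (V → Fin r) × (V → Fin r) // Q b y} := ⟨fun y => hb y.2.1⟩
    rw [Nat.card_of_isEmpty]
    simp [wgt, hb]

lemma G_eq_Hg (huv : u ≠ v) (hnadj : ¬ G.Adj u v) :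
    G = Hg G u v {y | G.Adj u y} {y | G.Adj v y} := by
  ext x y
  rw [Hg_adj]
  constructor
  · intro h
    refine ⟨h.ne, ?_⟩
    by_cases hxu : x = u
    · exact Or.inr (Or.inl ⟨hxu, show G.Adj u y from hxu ▸ h⟩)
    · by_cases hyu : y = u
      · exact Or.inr (Or.inr (Or.inl ⟨hyu, show G.Adj u x from (hyu ▸ h).symm⟩))
      · by_cases hxv : x = v
        · exact Or.inr (Or.inr (Or.inr (Or.inl ⟨hxv, show G.Adj v y from hxv ▸ h⟩)))
        · by_cases hyv : y = v
          · exact Or.inr (Or.inr (Or.inr (Or.inr ⟨hyv, show G.Adj v x from (hyv ▸ h).symm⟩)))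
          · exact Or.inl ⟨hxu, hxv, hyu, hyv, h⟩
  · rintro ⟨hne, hd⟩
    rcases hd with ⟨-, -, -, -, h⟩ | ⟨hxu, h⟩ | ⟨hyu, h⟩ | ⟨hxv, h⟩ | ⟨hyv, h⟩
    · exact h
    · rw [hxu]; exact h
    · rw [hyu]; exact (show G.Adj u x from h).symm
    · rw [hxv]; exact h
    · rw [hyv]; exact (show G.Adj v x from h).symm

lemma G'_eq_Hg (huv : u ≠ v) (hnadj : ¬ G.Adj u v) (G' : SimpleGraph V)
    (hG' : ∀ x y, G'.Adj x y ↔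
      ((x ≠ v ∧ y ≠ v ∧ G.Adj x y) ∨
       (x = v ∧ y ≠ v ∧ G.Adj u y) ∨
       (x ≠ v ∧ y = v ∧ G.Adj x u))) :
    G' = Hg G u v {y | G.Adj u y} {y | G.Adj u y} := by
  ext x y
  rw [hG', Hg_adj]
  constructor
  · rintro (⟨hxv, hyv, h⟩ | ⟨hxv, hyv, h⟩ | ⟨hxv, hyv, h⟩)
    · refine ⟨h.ne, ?_⟩
      by_cases hxu : x = u
      · exact Or.inr (Or.inl ⟨hxu, show G.Adj u y from hxu ▸ h⟩)
      · by_cases hyu : y = u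
        · exact Or.inr (Or.inr (Or.inl ⟨hyu, show G.Adj u x from (hyu ▸ h).symm⟩))
        · exact Or.inl ⟨hxu, hxv, hyu, hyv, h⟩
    · refine ⟨fun e => hyv (e.symm.trans hxv), ?_⟩
      exact Or.inr (Or.inr (Or.inr (Or.inl ⟨hxv, h⟩)))
    · refine ⟨fun e => hxv (e.trans hyv), ?_⟩
      exact Or.inr (Or.inr (Or.inr (Or.inr ⟨hyv, show G.Adj u x from h.symm⟩)))
  · rintro ⟨hne, hd⟩
    rcases hd with ⟨hxu, hxv, hyu, hyv, h⟩ | ⟨hxu, h⟩ | ⟨hyu, h⟩ | ⟨hxv, h⟩ | ⟨hyv, h⟩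
    · exact Or.inl ⟨hxv, hyv, h⟩
    · have h' : G.Adj u y := h
      have hyv : y ≠ v := fun e => hnadj (e ▸ h')
      exact Or.inl ⟨fun e => huv (hxu ▸ e), hyv, by rw [hxu]; exact h'⟩
    · have h' : G.Adj u x := h
      have hxv : x ≠ v := fun e => hnadj (e ▸ h')
      exact Or.inl ⟨hxv, fun e => huv (hyu ▸ e), by rw [hyu]; exact h'.symm⟩
    · have h' : G.Adj u y := h
      have hyv : y ≠ v := fun e => hnadj (e ▸ h')
      exact Or.inr (Or.inl ⟨hxv, hyv, h'⟩)
    · have h' : G.Adj u x := h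
      have hxv : x ≠ v := fun e => hnadj (e ▸ h')
      exact Or.inr (Or.inr ⟨hxv, hyv, h'.symm⟩)

end Main
end Statement6Aux

open Statement6Aux

/-- If `G` is `(r,p)`-extremal and `u, v` are distinct non-adjacent vertices, then the graph
`G'` obtained from `G` by deleting `v` and adding a twin of `u` in its place (the new
vertex is non-adjacent to `u` and adjacent exactly to the neighbors of `u`) is also
`(r,p)`-extremal (it has the same number `n` of vertices). -/
theorem statement6 {V : Type*} [Fintype V] (r k : ℕ) (hr : 2 ≤ r) (hk : 3 ≤ k)
    (p : Fin k → Fin k → Fin r) (hpsymm : ∀ i j, p i j = p j i)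
    (G : SimpleGraph V) (hext : IsExtremalGraph r p G)
    (u v : V) (huv : u ≠ v) (hnadj : ¬ G.Adj u v)
    (G' : SimpleGraph V)
    (hG' : ∀ x y, G'.Adj x y ↔
      ((x ≠ v ∧ y ≠ v ∧ G.Adj x y) ∨
       (x = v ∧ y ≠ v ∧ G.Adj u y) ∨
       (x ≠ v ∧ y = v ∧ G.Adj x u))) :
    IsExtremalGraph r p G' := by
  classical
  haveI : NeZero r := ⟨by omega⟩
  set Nu : Set V := {y | G.Adj u y} with hNu
  set Nv : Set V := {y | G.Adj v y} with hNv
  have hsu : u ∉ Nu := fun h => G.irrefl h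
  have hsv : v ∉ Nu := fun h => hnadj h
  have hut : u ∉ Nv := fun h => hnadj h.symm
  have hvt : v ∉ Nv := fun h => G.irrefl h
  have hGeq : G = Hg G u v Nu Nv := G_eq_Hg G u v huv hnadj
  have hG'eq : G' = Hg G u v Nu Nu := G'_eq_Hg G u v huv hnadj G' hG'
  have e1 : colCount r p G = ∑ b : V → V → Fin r, wgt p G u v Nu b * wgt p G u v Nv b :=
    (congrArg (colCount r p) hGeq).trans (decomp p G u v Nu Nv hsu hsv hut hvt huv)
  have e2 : colCount r p G' = ∑ b : V → V → Fin r, wgt p G u v Nu b * wgt p G u v Nu b :=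
    (congrArg (colCount r p) hG'eq).trans (decomp p G u v Nu Nu hsu hsv hsu hsv huv)
  have e3 : colCount r p (Hg G u v Nv Nv) =
      ∑ b : V → V → Fin r, wgt p G u v Nv b * wgt p G u v Nv b :=
    decomp p G u v Nv Nv hut hvt hut hvt huv
  have hCS : colCount r p G * colCount r p G ≤
      colCount r p G' * colCount r p (Hg G u v Nv Nv) := by
    rw [e1, e2, e3]
    have := Finset.sum_mul_sq_le_sq_mul_sq Finset.univ
      (fun b => (wgt p G u v Nu b : ℕ)) (fun b => wgt p G u v Nv b)
    simpa [pow_two] using this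
  have hyle : colCount r p (Hg G u v Nv Nv) ≤ colCount r p G := by
    let e := Fintype.equivFin V
    let K : SimpleGraph (Fin (Fintype.card V)) :=
      { Adj := fun i j => (Hg G u v Nv Nv).Adj (e.symm i) (e.symm j)
        symm := ⟨fun i j h => h.symm⟩
        loopless := ⟨fun i h => (Hg G u v Nv Nv).irrefl h⟩ }
    have hK : colCount r p K = colCount r p (Hg G u v Nv Nv) :=
      colCount_congr e p (Hg G u v Nv Nv) K (fun x y => by simp [K])
    calc colCount r p (Hg G u v Nv Nv) = colCount r p K := hK.symm
      _ ≤ colCount r p G := hext K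
  have hGle : colCount r p G ≤ colCount r p G' := by
    rcases Nat.eq_zero_or_pos (colCount r p G) with h0 | h0
    · simp [h0]
    · have h1 : colCount r p G * colCount r p G ≤ colCount r p G' * colCount r p G :=
        le_trans hCS (Nat.mul_le_mul_left _ hyle)
      exact Nat.le_of_mul_le_mul_right h1 h0
  intro H
  exact le_trans (hext H) hGle
end

section
/- Let r ≥ 2, let F̂ be any r-pattern of K_k, and let G be an (r,F̂)-extremal graph that is not a complete multipartite graph. Then for any three vertices u, v, w of G with uv ∉ E(G), uw ∉ E(G) and vw ∈ E(G), the graph obtained from G by deleting the edge vw is still (r,F̂)-extremal. -/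
open SimpleGraph

namespace EdgeDel

variable {V : Type*} {k r : ℕ}

/-- zero out all colors on pairs touching `S` -/
noncomputable def res [NeZero r] (S : Set V) (c : V → V → Fin r) : V → V → Fin r :=
  fun a b => by classical exact if a ∈ S ∨ b ∈ S then 0 else c a b

/-- isolate the vertices of `S` -/
def isol (Γ : SimpleGraph V) (S : Set V) : SimpleGraph V where
  Adj a b := Γ.Adj a b ∧ a ∉ S ∧ b ∉ S
  symm := ⟨by rintro a b ⟨h1, h2, h3⟩; exact ⟨h1.symm, h3, h2⟩⟩
  loopless := ⟨fun a h => Γ.irrefl h.1⟩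

def OKcol (p : Fin k → Fin k → Fin r) (Γ : SimpleGraph V) (c : V → V → Fin r) : Prop :=
  IsEdgeColoring Γ c ∧ ¬ ContainsPattern Γ p c

noncomputable def F [NeZero r] (p : Fin k → Fin k → Fin r) (Γ : SimpleGraph V) (S : Set V)
    (b : V → V → Fin r) : ℕ :=
  Nat.card {c : V → V → Fin r // OKcol p Γ c ∧ res S c = b}

lemma res_apply [NeZero r] (S : Set V) (c : V → V → Fin r) {a b : V}
    (ha : a ∉ S) (hb : b ∉ S) : res S c a b = c a b := by
  simp only [res]
  rw [if_neg]; push_neg; exact ⟨ha, hb⟩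

lemma res_apply_mem [NeZero r] (S : Set V) (c : V → V → Fin r) {a b : V}
    (h : a ∈ S ∨ b ∈ S) : res S c a b = 0 := by
  simp only [res]; rw [if_pos h]

lemma res_res [NeZero r] {S S' : Set V} (hSS : S ⊆ S') (c : V → V → Fin r) :
    res S' (res S c) = res S' c := by
  funext a b
  by_cases h : a ∈ S' ∨ b ∈ S'
  · rw [res_apply_mem _ _ h, res_apply_mem _ _ h]
  · push_neg at h
    rw [res_apply _ _ h.1 h.2, res_apply _ _ h.1 h.2,
      res_apply _ _ (fun hx => h.1 (hSS hx)) (fun hx => h.2 (hSS hx))]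

lemma res_fix [NeZero r] {S : Set V} {c b : V → V → Fin r} (h : res S c = b) :
    res S b = b := by rw [← h, res_res (le_refl S)]

lemma coloring_zero [NeZero r] {Γ : SimpleGraph V} {c : V → V → Fin r}
    (hc : IsEdgeColoring Γ c) {a b : V} (h : ¬ Γ.Adj a b) : c a b = 0 :=
  Fin.ext (by rw [hc.2 a b h]; simp)

/-- generic transfer of pattern copies -/
lemma contains_mono {V' : Type*} (p : Fin k → Fin k → Fin r) (Γ : SimpleGraph V)
    (Γ' : SimpleGraph V') {s : ℕ} (c : V → V → Fin s) (c' : V' → V' → Fin s) (g : V' → V)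
    (hg : Function.Injective g)
    (hadj : ∀ a b, Γ'.Adj a b → Γ.Adj (g a) (g b))
    (hcol : ∀ a b, Γ'.Adj a b → c (g a) (g b) = c' a b) :
    ContainsPattern Γ' p c' → ContainsPattern Γ p c := by
  rintro ⟨f, -, hinj, hcl, hpat⟩
  refine ⟨g ∘ f, fun i => Set.mem_univ _, hg.comp hinj, fun i j hij => hadj _ _ (hcl i j hij), ?_⟩
  intro i j i' j' hij hij'
  simp only [Function.comp_apply]
  rw [hcol _ _ (hcl i j hij), hcol _ _ (hcl i' j' hij')]
  exact hpat i j i' j' hij hij'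

lemma nat_card_sigma {ι : Type*} [Fintype ι] (T : ι → Type*) [∀ i, Finite (T i)] :
    Nat.card (Σ i, T i) = ∑ i, Nat.card (T i) := by
  letI : ∀ i, Fintype (T i) := fun i => Fintype.ofFinite _
  rw [Nat.card_eq_fintype_card, Fintype.card_sigma]
  simp [Nat.card_eq_fintype_card]

variable [Fintype V] [DecidableEq V] [NeZero r]

lemma colCount_eq_sum_F (p : Fin k → Fin k → Fin r) (Γ : SimpleGraph V) (S : Set V) :
    colCount r p Γ = ∑ b : V → V → Fin r, F p Γ S b := by
  have e1 : {c : V → V → Fin r // OKcol p Γ c} ≃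
      Σ b : V → V → Fin r, {c : V → V → Fin r // OKcol p Γ c ∧ res S c = b} :=
    ⟨fun c => ⟨res S c.1, c.1, c.2, rfl⟩, fun x => ⟨x.2.1, x.2.2.1⟩, fun c => rfl,
      by rintro ⟨b, c, hOK, rfl⟩; rfl⟩
  have : colCount r p Γ = Nat.card {c : V → V → Fin r // OKcol p Γ c} := rfl
  rw [this, Nat.card_congr e1, nat_card_sigma]
  rfl

lemma F_refine (p : Fin k → Fin k → Fin r) (Γ : SimpleGraph V) {S S' : Set V}
    (hSS : S ⊆ S') (b : V → V → Fin r) :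
    F p Γ S' b = ∑ b₂ : V → V → Fin r, if res S' b₂ = b then F p Γ S b₂ else 0 := by
  have e1 : {c : V → V → Fin r // OKcol p Γ c ∧ res S' c = b} ≃
      Σ b₂ : V → V → Fin r,
        {c : V → V → Fin r // (OKcol p Γ c ∧ res S' c = b) ∧ res S c = b₂} :=
    ⟨fun c => ⟨res S c.1, c.1, c.2, rfl⟩, fun x => ⟨x.2.1, x.2.2.1⟩, fun c => rfl,
      by rintro ⟨b₂, c, hOK, rfl⟩; rfl⟩
  rw [show F p Γ S' b = Nat.card {c : V → V → Fin r // OKcol p Γ c ∧ res S' c = b} from rfl,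
    Nat.card_congr e1, nat_card_sigma]
  refine Finset.sum_congr rfl fun b₂ _ => ?_
  by_cases hb₂ : res S' b₂ = b
  · rw [if_pos hb₂]
    refine Nat.card_congr (Equiv.subtypeEquivRight fun c => ?_)
    constructor
    · rintro ⟨⟨h1, -⟩, h3⟩; exact ⟨h1, h3⟩
    · rintro ⟨h1, h3⟩
      refine ⟨⟨h1, ?_⟩, h3⟩
      rw [← hb₂, ← h3, res_res hSS]
  · rw [if_neg hb₂]
    have : IsEmpty {c : V → V → Fin r // (OKcol p Γ c ∧ res S' c = b) ∧ res S c = b₂} := by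
      refine ⟨fun c => hb₂ ?_⟩
      obtain ⟨⟨-, h2⟩, h3⟩ := c.2
      rw [← h3, res_res hSS, h2]
    exact Nat.card_of_isEmpty

lemma F_res_OK [NeZero r] (hk : 2 ≤ k) (p : Fin k → Fin k → Fin r) (Γ : SimpleGraph V)
    (S' : Set V) (c : V → V → Fin r) (hc : OKcol p Γ c) : OKcol p (isol Γ S') (res S' c) := by
  obtain ⟨⟨hsym, hpin⟩, hfree⟩ := hc
  refine ⟨⟨fun a b => ?_, fun a b hna => ?_⟩, fun hcont => hfree ?_⟩
  · by_cases h : a ∈ S' ∨ b ∈ S'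
    · rw [res_apply_mem _ _ h, res_apply_mem _ _ (Or.symm h)]
    · push_neg at h
      rw [res_apply _ _ h.1 h.2, res_apply _ _ h.2 h.1, hsym]
  · by_cases h : a ∈ S' ∨ b ∈ S'
    · rw [res_apply_mem _ _ h]; simp
    · push_neg at h
      rw [res_apply _ _ h.1 h.2]
      refine hpin a b fun hadj => hna ⟨hadj, h.1, h.2⟩
  · exact contains_mono p Γ (isol Γ S') c (res S' c) id Function.injective_id
      (fun a b h => h.1) (fun a b h => (res_apply S' c h.2.1 h.2.2).symm) hcont

lemma F_prod [NeZero r] (hk : 2 ≤ k) (p : Fin k → Fin k → Fin r) (Γ : SimpleGraph V)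
    (S S₁ S₂ : Set V) (h1 : S₁ ⊆ S) (h2 : S₂ ⊆ S)
    (hdisj : ∀ x, x ∈ S₁ → x ∈ S₂ → False)
    (hedge : ∀ a b, Γ.Adj a b → a ∈ S₁ → b ∈ S₂ → False)
    (hiso : ∀ a b, Γ.Adj a b → a ∈ S → a ∈ S₁ ∨ a ∈ S₂)
    (b : V → V → Fin r) :
    F p Γ S b = F p (isol Γ S₂) S b * F p (isol Γ S₁) S b := by
  classical
  by_cases hb : res S b = b
  case neg =>
    have hempty : ∀ Γ' : SimpleGraph V, F p Γ' S b = 0 := by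
      intro Γ'
      have : IsEmpty {c : V → V → Fin r // OKcol p Γ' c ∧ res S c = b} :=
        ⟨fun c => hb (res_fix c.2.2)⟩
      exact Nat.card_of_isEmpty
    rw [hempty, hempty]
    simp
  case pos =>
  have hnt : Nontrivial (Fin k) := Fin.nontrivial_iff_two_le.mpr hk
  set m : (V → V → Fin r) → (V → V → Fin r) → (V → V → Fin r) :=
    fun c₁ c₂ => fun a b => if a ∈ S₂ ∨ b ∈ S₂ then c₂ a b else c₁ a b with hm
  -- merge is OK and has the right residue
  have key : ∀ c₁ c₂ : V → V → Fin r,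
      OKcol p (isol Γ S₂) c₁ ∧ res S c₁ = b →
      OKcol p (isol Γ S₁) c₂ ∧ res S c₂ = b →
      OKcol p Γ (m c₁ c₂) ∧ res S (m c₁ c₂) = b := by
    rintro c₁ c₂ ⟨hc₁, hr₁⟩ ⟨hc₂, hr₂⟩
    have c₁zero : ∀ a b : V, a ∈ S₂ ∨ b ∈ S₂ → c₁ a b = 0 := by
      intro a b h
      exact coloring_zero hc₁.1 fun hadj => by
        rcases h with h | h
        · exact hadj.2.1 h
        · exact hadj.2.2 h
    have c₂zero : ∀ a b : V, a ∈ S₁ ∨ b ∈ S₁ → c₂ a b = 0 := by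
      intro a b h
      exact coloring_zero hc₂.1 fun hadj => by
        rcases h with h | h
        · exact hadj.2.1 h
        · exact hadj.2.2 h
    have hc₁b : ∀ a b' : V, a ∉ S → b' ∉ S → c₁ a b' = b a b' := by
      intro a b' ha hb'
      rw [← hr₁, res_apply _ _ ha hb']
    have hc₂b : ∀ a b' : V, a ∉ S → b' ∉ S → c₂ a b' = b a b' := by
      intro a b' ha hb'
      rw [← hr₂, res_apply _ _ ha hb']
    -- outside S₁ ∪ S₂, the two colorings agree
    have hagree : ∀ a b' : V, a ∉ S₂ → b' ∉ S₂ → a ∉ S₁ → b' ∉ S₁ → c₁ a b' = c₂ a b' := by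
      intro a b' ha2 hb2 ha1 hb1
      by_cases haS : a ∈ S
      · have hna : ¬ Γ.Adj a b' := fun h => (hiso a b' h haS).elim ha1 ha2
        rw [coloring_zero hc₁.1 fun h => hna h.1, coloring_zero hc₂.1 fun h => hna h.1]
      · by_cases hbS : b' ∈ S
        · have hna : ¬ Γ.Adj a b' := fun h =>
            (hiso b' a h.symm hbS).elim hb1 hb2
          rw [coloring_zero hc₁.1 fun h => hna h.1, coloring_zero hc₂.1 fun h => hna h.1]
        · rw [hc₁b a b' haS hbS, hc₂b a b' haS hbS]
    constructor
    · constructor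
      · constructor
        · intro a b'
          by_cases h : a ∈ S₂ ∨ b' ∈ S₂
          · rw [hm]; simp only []
            rw [if_pos h, if_pos (Or.symm h)]
            exact hc₂.1.1 a b'
          · rw [hm]; simp only []
            rw [if_neg h, if_neg fun hh => h (Or.symm hh)]
            exact hc₁.1.1 a b'
        · intro a b' hna
          by_cases h : a ∈ S₂ ∨ b' ∈ S₂
          · rw [hm]; simp only []; rw [if_pos h]
            exact hc₂.1.2 a b' fun hadj => hna hadj.1
          · rw [hm]; simp only []; rw [if_neg h]
            exact hc₁.1.2 a b' fun hadj => hna hadj.1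
      · rintro ⟨f, -, hinj, hcl, hpat⟩
        by_cases hS₂ : ∃ i, f i ∈ S₂
        · obtain ⟨i₀, hi₀⟩ := hS₂
          have hnotS₁ : ∀ i, f i ∉ S₁ := by
            intro i hiS₁
            by_cases hii : i = i₀
            · exact hdisj (f i) hiS₁ (hii ▸ hi₀)
            · exact hedge (f i) (f i₀) (hcl i i₀ hii) hiS₁ hi₀
          have hcolor : ∀ i j, i ≠ j → m c₁ c₂ (f i) (f j) = c₂ (f i) (f j) := by
            intro i j hij
            by_cases h : f i ∈ S₂ ∨ f j ∈ S₂
            · rw [hm]; simp only []; rw [if_pos h]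
            · push_neg at h
              rw [hm]; simp only []; rw [if_neg (by push_neg; exact h)]
              exact hagree _ _ h.1 h.2 (hnotS₁ i) (hnotS₁ j)
          exact hc₂.2 ⟨f, fun i => Set.mem_univ _, hinj,
            fun i j hij => ⟨hcl i j hij, hnotS₁ i, hnotS₁ j⟩,
            fun i j i' j' hij hij' => by
              rw [← hcolor i j hij, ← hcolor i' j' hij']
              exact hpat i j i' j' hij hij'⟩
        · push_neg at hS₂
          have hcolor : ∀ i j, m c₁ c₂ (f i) (f j) = c₁ (f i) (f j) := by
            intro i j
            rw [hm]; simp only []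
            rw [if_neg (by push_neg; exact ⟨hS₂ i, hS₂ j⟩)]
          exact hc₁.2 ⟨f, fun i => Set.mem_univ _, hinj,
            fun i j hij => ⟨hcl i j hij, hS₂ i, hS₂ j⟩,
            fun i j i' j' hij hij' => by
              rw [← hcolor i j, ← hcolor i' j']
              exact hpat i j i' j' hij hij'⟩
    · funext a b'
      by_cases h : a ∈ S ∨ b' ∈ S
      · rw [res_apply_mem _ _ h, ← hb, res_apply_mem _ _ h]
      · push_neg at h
        rw [res_apply _ _ h.1 h.2, hm]; simp only []
        rw [if_neg (by push_neg; exact ⟨fun hx => h.1 (h2 hx), fun hx => h.2 (h2 hx)⟩)]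
        exact hc₁b a b' h.1 h.2
  -- the equivalence
  have eqv : {c : V → V → Fin r // OKcol p Γ c ∧ res S c = b} ≃
      ({c : V → V → Fin r // OKcol p (isol Γ S₂) c ∧ res S c = b} ×
       {c : V → V → Fin r // OKcol p (isol Γ S₁) c ∧ res S c = b}) := by
    refine ⟨fun c => (⟨res S₂ c.1, F_res_OK hk p Γ S₂ c.1 c.2.1, by rw [res_res h2, c.2.2]⟩,
                      ⟨res S₁ c.1, F_res_OK hk p Γ S₁ c.1 c.2.1, by rw [res_res h1, c.2.2]⟩),
           fun x => ⟨m x.1.1 x.2.1, key x.1.1 x.2.1 x.1.2 x.2.2⟩, ?_, ?_⟩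
    · rintro ⟨c, hOK, hres⟩
      apply Subtype.ext
      funext a b'
      simp only [hm]
      by_cases h : a ∈ S₂ ∨ b' ∈ S₂
      · rw [if_pos h]
        by_cases h1' : a ∈ S₁ ∨ b' ∈ S₁
        · rw [res_apply_mem _ _ h1']
        -- c a b' = 0 since this pair joins S₂ with S₁ or is inside…
          rcases h with h | h <;> rcases h1' with h1' | h1'
          · exact (hdisj a h1' h).elim
          · exact (coloring_zero hOK.1 fun hadj => hedge b' a hadj.symm h1' h).symm
          · exact (coloring_zero hOK.1 fun hadj => hedge a b' hadj h1' h).symm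
          · exact (hdisj b' h1' h).elim
        · push_neg at h1'
          rw [res_apply _ _ h1'.1 h1'.2]
      · push_neg at h
        rw [if_neg (by push_neg; exact h), res_apply _ _ h.1 h.2]
    · rintro ⟨⟨c₁, hc₁⟩, ⟨c₂, hc₂⟩⟩
      have e₁ : res S₂ (m c₁ c₂) = c₁ := by
        funext a b'
        by_cases h : a ∈ S₂ ∨ b' ∈ S₂
        · rw [res_apply_mem _ _ h]
          exact (coloring_zero hc₁.1.1 fun hadj => by
            rcases h with h | h
            · exact hadj.2.1 h
            · exact hadj.2.2 h).symm
        · push_neg at h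
          rw [res_apply _ _ h.1 h.2, hm]; simp only []
          rw [if_neg (by push_neg; exact h)]
      have e₂ : res S₁ (m c₁ c₂) = c₂ := by
        funext a b'
        by_cases h : a ∈ S₁ ∨ b' ∈ S₁
        · rw [res_apply_mem _ _ h]
          exact (coloring_zero hc₂.1.1 fun hadj => by
            rcases h with h | h
            · exact hadj.2.1 h
            · exact hadj.2.2 h).symm
        · push_neg at h
          rw [res_apply _ _ h.1 h.2, hm]; simp only []
          by_cases h2' : a ∈ S₂ ∨ b' ∈ S₂
          · rw [if_pos h2']
          · push_neg at h2'
            rw [if_neg (by push_neg; exact h2')]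
            -- c₁ = c₂ outside S₁ ∪ S₂
            have hagree : c₁ a b' = c₂ a b' := by
              by_cases haS : a ∈ S
              · have hna : ¬ Γ.Adj a b' := fun hh => (hiso a b' hh haS).elim h.1 h2'.1
                rw [coloring_zero hc₁.1.1 fun hh => hna hh.1,
                  coloring_zero hc₂.1.1 fun hh => hna hh.1]
              · by_cases hbS : b' ∈ S
                · have hna : ¬ Γ.Adj a b' := fun hh => (hiso b' a hh.symm hbS).elim h.2 h2'.2
                  rw [coloring_zero hc₁.1.1 fun hh => hna hh.1,
                    coloring_zero hc₂.1.1 fun hh => hna hh.1]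
                · rw [← res_apply S c₁ haS hbS, ← res_apply S c₂ haS hbS, hc₁.2, hc₂.2]
            exact hagree
      exact Prod.ext (Subtype.ext e₁) (Subtype.ext e₂)
  rw [show F p Γ S b = Nat.card {c : V → V → Fin r // OKcol p Γ c ∧ res S c = b} from rfl,
    Nat.card_congr eqv, Nat.card_prod]
  rfl

lemma F_empty [NeZero r] (p : Fin k → Fin k → Fin r) (Γ : SimpleGraph V) {S : Set V}
    {b : V → V → Fin r} (hb : ¬ res S b = b) : F p Γ S b = 0 := by
  have : IsEmpty {c : V → V → Fin r // OKcol p Γ c ∧ res S c = b} :=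
    ⟨fun c => hb (res_fix c.2.2)⟩
  exact Nat.card_of_isEmpty

lemma F_move [NeZero r] (p : Fin k → Fin k → Fin r) (Γ Γ' : SimpleGraph V) (S : Set V)
    (e : V ≃ V) (hfix : ∀ x, x ∉ S → e x = x)
    (hAdj : ∀ a b, Γ'.Adj a b ↔ Γ.Adj (e a) (e b)) (b : V → V → Fin r) :
    F p Γ' S b = F p Γ S b := by
  by_cases hb : res S b = b
  case neg => rw [F_empty p Γ hb, F_empty p Γ' hb]
  case pos =>
  have hfix' : ∀ x, x ∉ S → e.symm x = x := by
    intro x hx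
    conv_lhs => rw [← hfix x hx]
    exact e.symm_apply_apply x
  have main : ∀ (Γ₁ Γ₂ : SimpleGraph V) (e' : V ≃ V), (∀ x, x ∉ S → e' x = x) →
      (∀ a b', Γ₁.Adj a b' ↔ Γ₂.Adj (e' a) (e' b')) →
      ∀ c : V → V → Fin r, OKcol p Γ₂ c ∧ res S c = b →
        OKcol p Γ₁ (fun a b' => c (e' a) (e' b')) ∧
          res S (fun a b' => c (e' a) (e' b')) = b := by
    rintro Γ₁ Γ₂ e' hfix'' hAdj' c ⟨⟨⟨hsym, hpin⟩, hfree⟩, hres⟩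
    refine ⟨⟨⟨fun a b' => hsym _ _, fun a b' hna => hpin _ _ fun h => hna ((hAdj' a b').mpr h)⟩,
      fun hcont => hfree ?_⟩, ?_⟩
    · exact contains_mono p Γ₂ Γ₁ c (fun a b' => c (e' a) (e' b')) e' e'.injective
        (fun a b' h => (hAdj' a b').mp h) (fun a b' _ => rfl) hcont
    · funext a b'
      by_cases h : a ∈ S ∨ b' ∈ S
      · rw [res_apply_mem _ _ h, ← hb, res_apply_mem _ _ h]
      · push_neg at h
        rw [res_apply _ _ h.1 h.2, hfix'' a h.1, hfix'' b' h.2, ← hres, res_apply _ _ h.1 h.2]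
  have hAdj' : ∀ a b', Γ.Adj a b' ↔ Γ'.Adj (e.symm a) (e.symm b') := by
    intro a b'
    rw [hAdj (e.symm a) (e.symm b'), e.apply_symm_apply, e.apply_symm_apply]
  refine Nat.card_congr ⟨fun c => ⟨fun a b' => c.1 (e.symm a) (e.symm b'),
      main Γ Γ' e.symm hfix' hAdj' c.1 c.2⟩,
    fun c => ⟨fun a b' => c.1 (e a) (e b'), main Γ' Γ e hfix hAdj c.1 c.2⟩, ?_, ?_⟩
  · intro c; apply Subtype.ext; funext a b'; simp
  · intro c; apply Subtype.ext; funext a b'; simp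

lemma colCount_iso {V' : Type*} (p : Fin k → Fin k → Fin r) (e : V' ≃ V)
    (Γ : SimpleGraph V) (Γ' : SimpleGraph V')
    (hAdj : ∀ a b, Γ'.Adj a b ↔ Γ.Adj (e a) (e b)) :
    colCount r p Γ' = colCount r p Γ := by
  have main : ∀ c : V → V → Fin r,
      (IsEdgeColoring Γ c ∧ ¬ ContainsPattern Γ p c) →
      IsEdgeColoring Γ' (fun a b' => c (e a) (e b')) ∧
        ¬ ContainsPattern Γ' p (fun a b' => c (e a) (e b')) := by
    rintro c ⟨⟨hsym, hpin⟩, hfree⟩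
    refine ⟨⟨fun a b' => hsym _ _, fun a b' hna => hpin _ _ fun h => hna ((hAdj a b').mpr h)⟩,
      fun hcont => hfree ?_⟩
    exact contains_mono p Γ Γ' c (fun a b' => c (e a) (e b')) e e.injective
      (fun a b' h => (hAdj a b').mp h) (fun a b' _ => rfl) hcont
  have main' : ∀ c : V' → V' → Fin r,
      (IsEdgeColoring Γ' c ∧ ¬ ContainsPattern Γ' p c) →
      IsEdgeColoring Γ (fun a b' => c (e.symm a) (e.symm b')) ∧
        ¬ ContainsPattern Γ p (fun a b' => c (e.symm a) (e.symm b')) := by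
    have hAdj' : ∀ a b', Γ.Adj a b' ↔ Γ'.Adj (e.symm a) (e.symm b') := by
      intro a b'
      rw [hAdj (e.symm a) (e.symm b'), e.apply_symm_apply, e.apply_symm_apply]
    rintro c ⟨⟨hsym, hpin⟩, hfree⟩
    refine ⟨⟨fun a b' => hsym _ _, fun a b' hna => hpin _ _ fun h => hna ((hAdj' a b').mpr h)⟩,
      fun hcont => hfree ?_⟩
    exact contains_mono p Γ' Γ c (fun a b' => c (e.symm a) (e.symm b')) e.symm e.symm.injective
      (fun a b' h => (hAdj' a b').mp h) (fun a b' _ => rfl) hcont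
  refine Nat.card_congr ⟨fun c => ⟨fun a b' => c.1 (e.symm a) (e.symm b'), main' c.1 c.2⟩,
    fun c => ⟨fun a b' => c.1 (e a) (e b'), main c.1 c.2⟩, ?_, ?_⟩
  · intro c; apply Subtype.ext; funext a b'; simp
  · intro c; apply Subtype.ext; funext a b'; simp

lemma isol_adj (Γ : SimpleGraph V) (S : Set V) (a b : V) :
    (isol Γ S).Adj a b ↔ Γ.Adj a b ∧ a ∉ S ∧ b ∉ S := Iff.rfl

def twinG [DecidableEq V] (Γ : SimpleGraph V) (x y : V) : SimpleGraph V where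
  Adj a b := a ≠ b ∧ Γ.Adj (if a = x then y else a) (if b = x then y else b)
  symm := ⟨fun a b ⟨h1, h2⟩ => ⟨h1.symm, h2.symm⟩⟩
  loopless := ⟨fun a h => h.1 rfl⟩

lemma twinG_adj [DecidableEq V] (Γ : SimpleGraph V) (x y a b : V) :
    (twinG Γ x y).Adj a b ↔
      a ≠ b ∧ Γ.Adj (if a = x then y else a) (if b = x then y else b) := Iff.rfl

lemma isol_isol (Γ : SimpleGraph V) (S₁ S₂ : Set V) :
    isol (isol Γ S₁) S₂ = isol Γ (S₁ ∪ S₂) := by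
  ext a b
  simp only [isol_adj, Set.mem_union]
  tauto

lemma isol_eq_of_agree {Γ Γ' : SimpleGraph V} {S : Set V}
    (h : ∀ a b, a ∉ S → b ∉ S → (Γ.Adj a b ↔ Γ'.Adj a b)) : isol Γ S = isol Γ' S := by
  ext a b
  simp only [isol_adj]
  constructor
  · rintro ⟨h1, h2, h3⟩; exact ⟨(h a b h2 h3).mp h1, h2, h3⟩
  · rintro ⟨h1, h2, h3⟩; exact ⟨(h a b h2 h3).mpr h1, h2, h3⟩

lemma twin_swap_adj [DecidableEq V] (Γ : SimpleGraph V) (x y : V) (hxy : x ≠ y)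
    (S₀ : Set V) (hx : x ∉ S₀) (hy : y ∉ S₀) (a b : V) :
    (isol (twinG Γ x y) (insert y S₀)).Adj a b ↔
      (isol Γ (insert x S₀)).Adj (Equiv.swap x y a) (Equiv.swap x y b) := by
  rcases eq_or_ne a y with hay | hay
  · rw [hay]
    simp [isol_adj, Equiv.swap_apply_right, Set.mem_insert_iff]
  rcases eq_or_ne b y with hby | hby
  · rw [hby]
    simp [isol_adj, Equiv.swap_apply_right, Set.mem_insert_iff]
  rcases eq_or_ne a x with hax | hax
  · rcases eq_or_ne b x with hbx | hbx
    · rw [hax, hbx]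
      simp [isol_adj, twinG_adj, Equiv.swap_apply_left]
    · rw [hax, Equiv.swap_apply_left, Equiv.swap_apply_of_ne_of_ne hbx hby]
      simp only [isol_adj, twinG_adj, if_pos rfl, if_neg hbx, Set.mem_insert_iff, not_or]
      constructor
      · rintro ⟨⟨-, hadj⟩, -, hb1, hb2⟩
        exact ⟨hadj, ⟨hxy.symm, hy⟩, ⟨hbx, hb2⟩⟩
      · rintro ⟨hadj, -, hb1, hb2⟩
        exact ⟨⟨hbx.symm, hadj⟩, ⟨hxy, hx⟩, ⟨hby, hb2⟩⟩
  rcases eq_or_ne b x with hbx | hbx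
  · rw [hbx, Equiv.swap_apply_left, Equiv.swap_apply_of_ne_of_ne hax hay]
    simp only [isol_adj, twinG_adj, if_pos rfl, if_neg hax, Set.mem_insert_iff, not_or]
    constructor
    · rintro ⟨⟨-, hadj⟩, ⟨ha1, ha2⟩, -⟩
      exact ⟨hadj, ⟨hax, ha2⟩, ⟨hxy.symm, hy⟩⟩
    · rintro ⟨hadj, ⟨ha1, ha2⟩, -⟩
      exact ⟨⟨hax, hadj⟩, ⟨hay, ha2⟩, ⟨hxy, hx⟩⟩
  · rw [Equiv.swap_apply_of_ne_of_ne hax hay, Equiv.swap_apply_of_ne_of_ne hbx hby]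
    simp only [isol_adj, twinG_adj, if_neg hax, if_neg hbx, Set.mem_insert_iff, not_or]
    constructor
    · rintro ⟨⟨-, hadj⟩, ⟨-, ha2⟩, -, hb2⟩
      exact ⟨hadj, ⟨hax, ha2⟩, ⟨hbx, hb2⟩⟩
    · rintro ⟨hadj, ⟨-, ha2⟩, -, hb2⟩
      exact ⟨⟨hadj.ne, hadj⟩, ⟨hay, ha2⟩, ⟨hby, hb2⟩⟩

lemma eq_of_le_sums {ι : Type*} [Fintype ι] (A M : ι → ℕ)
    (h1 : ∑ b, A b * A b ≤ ∑ b, A b * M b)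
    (h2 : ∑ b, M b * M b ≤ ∑ b, A b * M b) :
    ∀ b, A b = M b := by
  have c1 : (∑ b, (A b : ℤ) * A b) ≤ ∑ b, (A b : ℤ) * M b := by exact_mod_cast h1
  have c2 : (∑ b, (M b : ℤ) * M b) ≤ ∑ b, (A b : ℤ) * M b := by exact_mod_cast h2
  have key : ∑ b, ((A b : ℤ) - M b) ^ 2 ≤ 0 := by
    have expand : ∑ b, ((A b : ℤ) - M b) ^ 2 =
        (∑ b, (A b : ℤ) * A b) + (∑ b, (M b : ℤ) * M b) - 2 * ∑ b, (A b : ℤ) * M b := by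
      rw [← Finset.sum_add_distrib, Finset.mul_sum, ← Finset.sum_sub_distrib]
      exact Finset.sum_congr rfl fun b _ => by ring
    rw [expand]
    linarith
  have hz := (Finset.sum_eq_zero_iff_of_nonneg (fun b _ => sq_nonneg ((A b : ℤ) - M b))).mp
    (le_antisymm key (Finset.sum_nonneg fun b _ => sq_nonneg _))
  intro b
  have hb := hz b (Finset.mem_univ b)
  have := sub_eq_zero.mp (pow_eq_zero_iff (n := 2) (by norm_num) |>.mp hb)
  exact_mod_cast this

lemma cs_nat {ι : Type*} [Fintype ι] (a s : ι → ℕ) :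
    (∑ b, a b * a b * s b) ^ 2 ≤ (∑ b, a b * (a b * a b)) * (∑ b, a b * (s b * s b)) := by
  have hreal := Finset.sum_mul_sq_le_sq_mul_sq Finset.univ
    (fun b => (a b : ℝ) * Real.sqrt (a b)) (fun b => Real.sqrt (a b) * (s b : ℝ))
  have hss : ∀ b, Real.sqrt (a b : ℝ) * Real.sqrt (a b : ℝ) = (a b : ℝ) := fun b =>
    Real.mul_self_sqrt (Nat.cast_nonneg _)
  have e1 : ∀ b, ((a b : ℝ) * Real.sqrt (a b)) * (Real.sqrt (a b) * (s b : ℝ))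
      = (a b : ℝ) * a b * s b := by
    intro b
    rw [show ((a b : ℝ) * Real.sqrt (a b)) * (Real.sqrt (a b) * (s b : ℝ))
      = (a b : ℝ) * (Real.sqrt (a b) * Real.sqrt (a b)) * s b from by ring, hss]
  have e2 : ∀ b, ((a b : ℝ) * Real.sqrt (a b)) ^ 2 = (a b : ℝ) * (a b * a b) := by
    intro b
    rw [show ((a b : ℝ) * Real.sqrt (a b)) ^ 2
      = (Real.sqrt (a b) * Real.sqrt (a b)) * ((a b : ℝ) * a b) from by ring, hss]
  have e3 : ∀ b, (Real.sqrt (a b) * (s b : ℝ)) ^ 2 = (a b : ℝ) * (s b * s b) := by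
    intro b
    rw [show (Real.sqrt (a b) * (s b : ℝ)) ^ 2
      = (Real.sqrt (a b) * Real.sqrt (a b)) * ((s b : ℝ) * s b) from by ring, hss]
  rw [Finset.sum_congr rfl (fun b _ => e1 b), Finset.sum_congr rfl (fun b _ => e2 b),
    Finset.sum_congr rfl (fun b _ => e3 b)] at hreal
  have : ((∑ b, a b * a b * s b : ℕ) : ℝ) ^ 2
      ≤ ((∑ b, a b * (a b * a b) : ℕ) : ℝ) * ((∑ b, a b * (s b * s b) : ℕ) : ℝ) := by
    push_cast
    exact hreal
  exact_mod_cast this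

lemma final_le {ι : Type*} [Fintype ι] (a s : ι → ℕ)
    (h : ∑ b, a b * (a b * a b) ≤ ∑ b, a b * a b * s b) :
    ∑ b, a b * a b * s b ≤ ∑ b, a b * (s b * s b) := by
  rcases Nat.eq_zero_or_pos (∑ b, a b * a b * s b) with h0 | h0
  · rw [h0]; exact Nat.zero_le _
  · have hcs := cs_nat a s
    have : (∑ b, a b * a b * s b) * (∑ b, a b * a b * s b)
        ≤ (∑ b, a b * a b * s b) * (∑ b, a b * (s b * s b)) := by
      calc (∑ b, a b * a b * s b) * (∑ b, a b * a b * s b)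
          = (∑ b, a b * a b * s b) ^ 2 := (sq _).symm
        _ ≤ (∑ b, a b * (a b * a b)) * (∑ b, a b * (s b * s b)) := hcs
        _ ≤ (∑ b, a b * a b * s b) * (∑ b, a b * (s b * s b)) :=
            Nat.mul_le_mul_right _ h
    exact Nat.le_of_mul_le_mul_left this h0

end EdgeDel

open EdgeDel

/-- Edge deletion lemma: if `G` is `(r,p)`-extremal but not complete multipartite, then for
any vertices `u, v, w` with `uv ∉ E(G)`, `uw ∉ E(G)` and `vw ∈ E(G)`, deleting the edge
`vw` yields a graph that is still `(r,p)`-extremal. -/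
theorem statement7 {V : Type*} [Fintype V] (r k : ℕ) (hr : 2 ≤ r) (hk : 3 ≤ k)
    (p : Fin k → Fin k → Fin r) (hpsymm : ∀ i j, p i j = p j i)
    (G : SimpleGraph V) (hext : IsExtremalGraph r p G)
    (hnotmulti : ¬ IsCompleteMultipartiteGraph G)
    (u v w : V) (huv : ¬ G.Adj u v) (huw : ¬ G.Adj u w) (hvw : G.Adj v w) :
    IsExtremalGraph r p (G.deleteEdges {s(v, w)}) := by
  classical
  haveI : NeZero r := ⟨by omega⟩
  have hk2 : 2 ≤ k := by omega
  -- distinctness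
  have huv' : u ≠ v := fun h => huw (h ▸ hvw)
  have huw' : u ≠ w := fun h => huv (h ▸ hvw.symm)
  have hvw' : v ≠ w := hvw.ne
  have ins_empty : ∀ z : V, insert z (∅ : Set V) = {z} := fun z => by ext t; simp
  -- the graphs
  set G' : SimpleGraph V := G.deleteEdges {s(v, w)} with hG'def
  have hG'adj : ∀ a b, G'.Adj a b ↔ (G.Adj a b ∧ ¬ (s(a,b) = s(v,w))) := by
    intro a b
    rw [hG'def, SimpleGraph.deleteEdges_adj]
    simp
  have hG'vw : ¬ G'.Adj v w := fun h => ((hG'adj v w).mp h).2 rfl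
  have hG'uv : ¬ G'.Adj u v := fun h => huv ((hG'adj u v).mp h).1
  have hG'uw : ¬ G'.Adj u w := fun h => huw ((hG'adj u w).mp h).1
  -- extremality transported to graphs on V
  have hext' : ∀ Γ : SimpleGraph V, colCount r p Γ ≤ colCount r p G := by
    intro Γ
    let e : Fin (Fintype.card V) ≃ V := (Fintype.equivFin V).symm
    let H : SimpleGraph (Fin (Fintype.card V)) :=
      { Adj := fun i j => Γ.Adj (e i) (e j)
        symm := ⟨fun i j h => h.symm⟩
        loopless := ⟨fun i h => Γ.irrefl h⟩ }
    have hco : colCount r p H = colCount r p Γ :=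
      colCount_iso p e Γ H (fun a b => Iff.rfl)
    calc colCount r p Γ = colCount r p H := hco.symm
      _ ≤ colCount r p G := hext H
  -- twin graph non-adjacency facts
  have hGvu_uv : ¬ (twinG G v u).Adj u v := by
    rintro ⟨h1, h2⟩
    rw [if_neg huv', if_pos rfl] at h2
    exact G.irrefl h2
  have hGuv_uv : ¬ (twinG G u v).Adj u v := by
    rintro ⟨h1, h2⟩
    rw [if_pos rfl, if_neg (Ne.symm huv')] at h2
    exact G.irrefl h2
  have hGwu_uw : ¬ (twinG G w u).Adj u w := by
    rintro ⟨h1, h2⟩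
    rw [if_neg huw', if_pos rfl] at h2
    exact G.irrefl h2
  have hGuw_uw : ¬ (twinG G u w).Adj u w := by
    rintro ⟨h1, h2⟩
    rw [if_pos rfl, if_neg (Ne.symm huw')] at h2
    exact G.irrefl h2
  have hGvwu_uv : ¬ (twinG (twinG G v u) w u).Adj u v := by
    rintro ⟨h1, h2⟩
    rw [if_neg huw', if_neg hvw'] at h2
    exact hGvu_uv ⟨h1, h2.2⟩
  have hGvwu_uw : ¬ (twinG (twinG G v u) w u).Adj u w := by
    rintro ⟨h1, h2⟩
    rw [if_neg huw', if_pos rfl] at h2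
    exact (twinG G v u).irrefl h2
  have hGvwu_vw : ¬ (twinG (twinG G v u) w u).Adj v w := by
    rintro ⟨h1, h2⟩
    rw [if_neg hvw', if_pos rfl] at h2
    obtain ⟨h3, h4⟩ := h2
    rw [if_pos rfl, if_neg huv'] at h4
    exact G.irrefl h4
  -- ============ pair (u,v) decompositions ============
  have hsub_u_uv : ({u} : Set V) ⊆ {u, v} := by
    intro x hx; rw [Set.mem_singleton_iff] at hx; rw [hx]; exact Set.mem_insert _ _
  have hsub_v_uv : ({v} : Set V) ⊆ {u, v} := by
    intro x hx; rw [Set.mem_singleton_iff] at hx; rw [hx]; right; rfl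
  have hF1 : ∀ b, F p G {u, v} b = F p (isol G {v}) {u, v} b * F p (isol G {u}) {u, v} b := by
    intro b
    refine F_prod hk2 p G {u, v} {u} {v} hsub_u_uv hsub_v_uv ?_ ?_ ?_ b
    · rintro x hx hy
      rw [Set.mem_singleton_iff] at hx hy
      exact huv' (hx ▸ hy ▸ rfl)
    · rintro a b hadj ha hb
      rw [Set.mem_singleton_iff] at ha hb
      rw [ha, hb] at hadj
      exact huv hadj
    · intro a b _ ha
      simp only [Set.mem_insert_iff, Set.mem_singleton_iff] at ha ⊢
      exact ha
  have hF2 : ∀ b, F p (twinG G v u) {u, v} b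
      = F p (isol G {v}) {u, v} b * F p (isol G {v}) {u, v} b := by
    intro b
    have step := F_prod hk2 p (twinG G v u) {u, v} {u} {v} hsub_u_uv hsub_v_uv
      (by rintro x hx hy
          rw [Set.mem_singleton_iff] at hx hy
          exact huv' (hx ▸ hy ▸ rfl))
      (by rintro a b hadj ha hb
          rw [Set.mem_singleton_iff] at ha hb
          rw [ha, hb] at hadj
          exact hGvu_uv hadj)
      (by intro a b _ ha
          simp only [Set.mem_insert_iff, Set.mem_singleton_iff] at ha ⊢
          exact ha) b
    have e1 : isol (twinG G v u) {v} = isol G {v} := by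
      apply isol_eq_of_agree
      intro a b ha hb
      rw [Set.mem_singleton_iff] at ha hb
      rw [twinG_adj, if_neg ha, if_neg hb]
      constructor
      · rintro ⟨-, h⟩; exact h
      · intro h; exact ⟨h.ne, h⟩
    have e2 : ∀ b', F p (isol (twinG G v u) {u}) {u, v} b'
        = F p (isol G {v}) {u, v} b' := by
      intro b'
      refine F_move p (isol G {v}) (isol (twinG G v u) {u}) {u, v} (Equiv.swap v u) ?_ ?_ b'
      · intro x hx
        simp only [Set.mem_insert_iff, Set.mem_singleton_iff, not_or] at hx
        exact Equiv.swap_apply_of_ne_of_ne hx.2 hx.1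
      · intro a b'
        have := twin_swap_adj G v u (Ne.symm huv') ∅ (Set.notMem_empty v)
          (Set.notMem_empty u) a b'
        rwa [ins_empty u, ins_empty v] at this
    rw [step, e1, e2]
  have hF3 : ∀ b, F p (twinG G u v) {u, v} b
      = F p (isol G {u}) {u, v} b * F p (isol G {u}) {u, v} b := by
    intro b
    have step := F_prod hk2 p (twinG G u v) {u, v} {u} {v} hsub_u_uv hsub_v_uv
      (by rintro x hx hy
          rw [Set.mem_singleton_iff] at hx hy
          exact huv' (hx ▸ hy ▸ rfl))
      (by rintro a b hadj ha hb
          rw [Set.mem_singleton_iff] at ha hb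
          rw [ha, hb] at hadj
          exact hGuv_uv hadj)
      (by intro a b _ ha
          simp only [Set.mem_insert_iff, Set.mem_singleton_iff] at ha ⊢
          exact ha) b
    have e1 : isol (twinG G u v) {u} = isol G {u} := by
      apply isol_eq_of_agree
      intro a b ha hb
      rw [Set.mem_singleton_iff] at ha hb
      rw [twinG_adj, if_neg ha, if_neg hb]
      constructor
      · rintro ⟨-, h⟩; exact h
      · intro h; exact ⟨h.ne, h⟩
    have e2 : ∀ b', F p (isol (twinG G u v) {v}) {u, v} b'
        = F p (isol G {u}) {u, v} b' := by
      intro b'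
      refine F_move p (isol G {u}) (isol (twinG G u v) {v}) {u, v} (Equiv.swap u v) ?_ ?_ b'
      · intro x hx
        simp only [Set.mem_insert_iff, Set.mem_singleton_iff, not_or] at hx
        exact Equiv.swap_apply_of_ne_of_ne hx.1 hx.2
      · intro a b'
        have := twin_swap_adj G u v huv' ∅ (Set.notMem_empty u)
          (Set.notMem_empty v) a b'
        rwa [ins_empty v, ins_empty u] at this
    rw [step, e2, e1]
  have E1 : ∀ b, F p (isol G {v}) {u, v} b = F p (isol G {u}) {u, v} b := by
    apply eq_of_le_sums
    · have h1 : colCount r p (twinG G v u)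
          = ∑ b : V → V → Fin r, F p (isol G {v}) {u, v} b * F p (isol G {v}) {u, v} b := by
        rw [colCount_eq_sum_F p (twinG G v u) {u, v}]
        exact Finset.sum_congr rfl fun b _ => hF2 b
      have h2 : colCount r p G
          = ∑ b : V → V → Fin r, F p (isol G {v}) {u, v} b * F p (isol G {u}) {u, v} b := by
        rw [colCount_eq_sum_F p G {u, v}]
        exact Finset.sum_congr rfl fun b _ => hF1 b
      rw [← h1, ← h2]
      exact hext' _
    · have h1 : colCount r p (twinG G u v)
          = ∑ b : V → V → Fin r, F p (isol G {u}) {u, v} b * F p (isol G {u}) {u, v} b := by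
        rw [colCount_eq_sum_F p (twinG G u v) {u, v}]
        exact Finset.sum_congr rfl fun b _ => hF3 b
      have h2 : colCount r p G
          = ∑ b : V → V → Fin r, F p (isol G {v}) {u, v} b * F p (isol G {u}) {u, v} b := by
        rw [colCount_eq_sum_F p G {u, v}]
        exact Finset.sum_congr rfl fun b _ => hF1 b
      rw [← h1, ← h2]
      exact hext' _
  -- ============ pair (u,w) decompositions ============
  have hsub_u_uw : ({u} : Set V) ⊆ {u, w} := by
    intro x hx; rw [Set.mem_singleton_iff] at hx; rw [hx]; exact Set.mem_insert _ _
  have hsub_w_uw : ({w} : Set V) ⊆ {u, w} := by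
    intro x hx; rw [Set.mem_singleton_iff] at hx; rw [hx]; right; rfl
  have hF1w : ∀ b, F p G {u, w} b = F p (isol G {w}) {u, w} b * F p (isol G {u}) {u, w} b := by
    intro b
    refine F_prod hk2 p G {u, w} {u} {w} hsub_u_uw hsub_w_uw ?_ ?_ ?_ b
    · rintro x hx hy
      rw [Set.mem_singleton_iff] at hx hy
      exact huw' (hx ▸ hy ▸ rfl)
    · rintro a b hadj ha hb
      rw [Set.mem_singleton_iff] at ha hb
      rw [ha, hb] at hadj
      exact huw hadj
    · intro a b _ ha
      simp only [Set.mem_insert_iff, Set.mem_singleton_iff] at ha ⊢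
      exact ha
  have hF2w : ∀ b, F p (twinG G w u) {u, w} b
      = F p (isol G {w}) {u, w} b * F p (isol G {w}) {u, w} b := by
    intro b
    have step := F_prod hk2 p (twinG G w u) {u, w} {u} {w} hsub_u_uw hsub_w_uw
      (by rintro x hx hy
          rw [Set.mem_singleton_iff] at hx hy
          exact huw' (hx ▸ hy ▸ rfl))
      (by rintro a b hadj ha hb
          rw [Set.mem_singleton_iff] at ha hb
          rw [ha, hb] at hadj
          exact hGwu_uw hadj)
      (by intro a b _ ha
          simp only [Set.mem_insert_iff, Set.mem_singleton_iff] at ha ⊢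
          exact ha) b
    have e1 : isol (twinG G w u) {w} = isol G {w} := by
      apply isol_eq_of_agree
      intro a b ha hb
      rw [Set.mem_singleton_iff] at ha hb
      rw [twinG_adj, if_neg ha, if_neg hb]
      constructor
      · rintro ⟨-, h⟩; exact h
      · intro h; exact ⟨h.ne, h⟩
    have e2 : ∀ b', F p (isol (twinG G w u) {u}) {u, w} b'
        = F p (isol G {w}) {u, w} b' := by
      intro b'
      refine F_move p (isol G {w}) (isol (twinG G w u) {u}) {u, w} (Equiv.swap w u) ?_ ?_ b'
      · intro x hx
        simp only [Set.mem_insert_iff, Set.mem_singleton_iff, not_or] at hx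
        exact Equiv.swap_apply_of_ne_of_ne hx.2 hx.1
      · intro a b'
        have := twin_swap_adj G w u (Ne.symm huw') ∅ (Set.notMem_empty w)
          (Set.notMem_empty u) a b'
        rwa [ins_empty u, ins_empty w] at this
    rw [step, e1, e2]
  have hF3w : ∀ b, F p (twinG G u w) {u, w} b
      = F p (isol G {u}) {u, w} b * F p (isol G {u}) {u, w} b := by
    intro b
    have step := F_prod hk2 p (twinG G u w) {u, w} {u} {w} hsub_u_uw hsub_w_uw
      (by rintro x hx hy
          rw [Set.mem_singleton_iff] at hx hy
          exact huw' (hx ▸ hy ▸ rfl))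
      (by rintro a b hadj ha hb
          rw [Set.mem_singleton_iff] at ha hb
          rw [ha, hb] at hadj
          exact hGuw_uw hadj)
      (by intro a b _ ha
          simp only [Set.mem_insert_iff, Set.mem_singleton_iff] at ha ⊢
          exact ha) b
    have e1 : isol (twinG G u w) {u} = isol G {u} := by
      apply isol_eq_of_agree
      intro a b ha hb
      rw [Set.mem_singleton_iff] at ha hb
      rw [twinG_adj, if_neg ha, if_neg hb]
      constructor
      · rintro ⟨-, h⟩; exact h
      · intro h; exact ⟨h.ne, h⟩
    have e2 : ∀ b', F p (isol (twinG G u w) {w}) {u, w} b'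
        = F p (isol G {u}) {u, w} b' := by
      intro b'
      refine F_move p (isol G {u}) (isol (twinG G u w) {w}) {u, w} (Equiv.swap u w) ?_ ?_ b'
      · intro x hx
        simp only [Set.mem_insert_iff, Set.mem_singleton_iff, not_or] at hx
        exact Equiv.swap_apply_of_ne_of_ne hx.1 hx.2
      · intro a b'
        have := twin_swap_adj G u w huw' ∅ (Set.notMem_empty u)
          (Set.notMem_empty w) a b'
        rwa [ins_empty w, ins_empty u] at this
    rw [step, e2, e1]
  have E2 : ∀ b, F p (isol G {w}) {u, w} b = F p (isol G {u}) {u, w} b := by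
    apply eq_of_le_sums
    · have h1 : colCount r p (twinG G w u)
          = ∑ b : V → V → Fin r, F p (isol G {w}) {u, w} b * F p (isol G {w}) {u, w} b := by
        rw [colCount_eq_sum_F p (twinG G w u) {u, w}]
        exact Finset.sum_congr rfl fun b _ => hF2w b
      have h2 : colCount r p G
          = ∑ b : V → V → Fin r, F p (isol G {w}) {u, w} b * F p (isol G {u}) {u, w} b := by
        rw [colCount_eq_sum_F p G {u, w}]
        exact Finset.sum_congr rfl fun b _ => hF1w b
      rw [← h1, ← h2]
      exact hext' _
    · have h1 : colCount r p (twinG G u w)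
          = ∑ b : V → V → Fin r, F p (isol G {u}) {u, w} b * F p (isol G {u}) {u, w} b := by
        rw [colCount_eq_sum_F p (twinG G u w) {u, w}]
        exact Finset.sum_congr rfl fun b _ => hF3w b
      have h2 : colCount r p G
          = ∑ b : V → V → Fin r, F p (isol G {w}) {u, w} b * F p (isol G {u}) {u, w} b := by
        rw [colCount_eq_sum_F p G {u, w}]
        exact Finset.sum_congr rfl fun b _ => hF1w b
      rw [← h1, ← h2]
      exact hext' _
  -- ============ triple base ============
  have hsub_u_T : ({u} : Set V) ⊆ {u, v, w} := by
    intro x hx; rw [Set.mem_singleton_iff] at hx; rw [hx]; exact Set.mem_insert _ _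
  have hsub_v_T : ({v} : Set V) ⊆ {u, v, w} := by
    intro x hx; rw [Set.mem_singleton_iff] at hx; rw [hx]; right; left; rfl
  have hsub_w_T : ({w} : Set V) ⊆ {u, v, w} := by
    intro x hx; rw [Set.mem_singleton_iff] at hx; rw [hx]; right; right; rfl
  have hsub_vw_T : ({v, w} : Set V) ⊆ {u, v, w} := by
    intro x hx
    simp only [Set.mem_insert_iff, Set.mem_singleton_iff] at hx ⊢
    tauto
  have hsub_uv_T : ({u, v} : Set V) ⊆ {u, v, w} := by
    intro x hx
    simp only [Set.mem_insert_iff, Set.mem_singleton_iff] at hx ⊢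
    tauto
  have hsub_uw_T : ({u, w} : Set V) ⊆ {u, v, w} := by
    intro x hx
    simp only [Set.mem_insert_iff, Set.mem_singleton_iff] at hx ⊢
    tauto
  have hdisj_u_vw : ∀ x : V, x ∈ ({u} : Set V) → x ∈ ({v, w} : Set V) → False := by
    intro x hx hy
    rw [Set.mem_singleton_iff] at hx
    simp only [Set.mem_insert_iff, Set.mem_singleton_iff] at hy
    rcases hy with hy | hy
    · exact huv' (hx ▸ hy ▸ rfl)
    · exact huw' (hx ▸ hy ▸ rfl)
  have hiso_u_vw : ∀ (a b : V), a ∈ ({u, v, w} : Set V) →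
      a ∈ ({u} : Set V) ∨ a ∈ ({v, w} : Set V) := by
    intro a b ha
    simp only [Set.mem_insert_iff, Set.mem_singleton_iff] at ha ⊢
    tauto
  -- decomposition of G over the triple base
  have hF7 : ∀ b, F p G {u, v, w} b
      = F p (isol G {v, w}) {u, v, w} b * F p (isol G {u}) {u, v, w} b := by
    intro b
    refine F_prod hk2 p G {u, v, w} {u} {v, w} hsub_u_T hsub_vw_T hdisj_u_vw ?_
      (fun a b hadj ha => hiso_u_vw a b ha) b
    rintro a b hadj ha hb
    rw [Set.mem_singleton_iff] at ha
    simp only [Set.mem_insert_iff, Set.mem_singleton_iff] at hb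
    subst ha
    rcases hb with rfl | rfl
    · exact huv hadj
    · exact huw hadj
  -- q = a₃ · s_w
  have hq : ∀ b, F p (isol G {u}) {u, v, w} b
      = F p (isol G {v, w}) {u, v, w} b * F p (isol G {u, v}) {u, v, w} b := by
    intro b
    have step1 : F p (isol G {u}) {u, v, w} b = F p (isol G {v}) {u, v, w} b := by
      rw [F_refine p (isol G {u}) hsub_uv_T b, F_refine p (isol G {v}) hsub_uv_T b]
      exact Finset.sum_congr rfl fun b₂ _ => by rw [← E1 b₂]
    have prod2 := F_prod hk2 p (isol G {v}) {u, v, w} {u} {w} hsub_u_T hsub_w_T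
      (by rintro x hx hy
          rw [Set.mem_singleton_iff] at hx hy
          exact huw' (hx ▸ hy ▸ rfl))
      (by rintro a b hadj ha hb
          rw [Set.mem_singleton_iff] at ha hb
          rw [ha, hb] at hadj
          exact huw hadj.1)
      (by intro a b hadj ha
          simp only [Set.mem_insert_iff, Set.mem_singleton_iff] at ha ⊢
          rcases ha with rfl | rfl | rfl
          · exact Or.inl rfl
          · exact (hadj.2.1 rfl).elim
          · exact Or.inr rfl) b
    have e_a : isol (isol G {v}) {w} = isol G {v, w} := by
      rw [isol_isol, Set.singleton_union]
    have e_b : isol (isol G {v}) {u} = isol G {u, v} := by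
      rw [isol_isol, Set.singleton_union, Set.pair_comm]
    rw [step1, prod2, e_a, e_b]
  -- q = a₃ · s_v
  have hq' : ∀ b, F p (isol G {u}) {u, v, w} b
      = F p (isol G {v, w}) {u, v, w} b * F p (isol G {u, w}) {u, v, w} b := by
    intro b
    have step1 : F p (isol G {u}) {u, v, w} b = F p (isol G {w}) {u, v, w} b := by
      rw [F_refine p (isol G {u}) hsub_uw_T b, F_refine p (isol G {w}) hsub_uw_T b]
      exact Finset.sum_congr rfl fun b₂ _ => by rw [← E2 b₂]
    have prod2 := F_prod hk2 p (isol G {w}) {u, v, w} {u} {v} hsub_u_T hsub_v_T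
      (by rintro x hx hy
          rw [Set.mem_singleton_iff] at hx hy
          exact huv' (hx ▸ hy ▸ rfl))
      (by rintro a b hadj ha hb
          rw [Set.mem_singleton_iff] at ha hb
          rw [ha, hb] at hadj
          exact huv hadj.1)
      (by intro a b hadj ha
          simp only [Set.mem_insert_iff, Set.mem_singleton_iff] at ha ⊢
          rcases ha with rfl | rfl | rfl
          · exact Or.inl rfl
          · exact Or.inr rfl
          · exact (hadj.2.1 rfl).elim) b
    have e_a : isol (isol G {w}) {v} = isol G {v, w} := by
      rw [isol_isol, Set.singleton_union, Set.pair_comm]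
    have e_b : isol (isol G {w}) {u} = isol G {u, w} := by
      rw [isol_isol, Set.singleton_union, Set.pair_comm]
    rw [step1, prod2, e_a, e_b]
  -- ============ decomposition of G' ============
  have hG'isol : ∀ S : Set V, v ∈ S ∨ w ∈ S → isol G' S = isol G S := by
    intro S hS
    apply isol_eq_of_agree
    intro a b ha hb
    rw [hG'adj]
    constructor
    · exact And.left
    · intro h
      refine ⟨h, fun hs => ?_⟩
      rw [Sym2.eq_iff] at hs
      rcases hs with ⟨ha', hb'⟩ | ⟨ha', hb'⟩ <;> rcases hS with hS | hS
      · exact ha (ha' ▸ hS)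
      · exact hb (hb' ▸ hS)
      · exact hb (hb' ▸ hS)
      · exact ha (ha' ▸ hS)
  have hF10 : ∀ b, F p G' {u, v, w} b = F p (isol G {v, w}) {u, v, w} b *
      (F p (isol G {u, w}) {u, v, w} b * F p (isol G {u, v}) {u, v, w} b) := by
    intro b
    have step1 := F_prod hk2 p G' {u, v, w} {u} {v, w} hsub_u_T hsub_vw_T hdisj_u_vw
      (by rintro a b hadj ha hb
          rw [Set.mem_singleton_iff] at ha
          simp only [Set.mem_insert_iff, Set.mem_singleton_iff] at hb
          subst ha
          rcases hb with rfl | rfl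
          · exact hG'uv hadj
          · exact hG'uw hadj)
      (fun a b hadj ha => hiso_u_vw a b ha) b
    have step2 := F_prod hk2 p (isol G' {u}) {u, v, w} {v} {w} hsub_v_T hsub_w_T
      (by rintro x hx hy
          rw [Set.mem_singleton_iff] at hx hy
          exact hvw' (hx ▸ hy ▸ rfl))
      (by rintro a b hadj ha hb
          rw [Set.mem_singleton_iff] at ha hb
          rw [ha, hb] at hadj
          exact hG'vw hadj.1)
      (by intro a b hadj ha
          simp only [Set.mem_insert_iff, Set.mem_singleton_iff] at ha ⊢
          rcases ha with rfl | rfl | rfl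
          · exact (hadj.2.1 rfl).elim
          · exact Or.inl rfl
          · exact Or.inr rfl) b
    have e_1 : isol (isol G' {u}) {w} = isol G {u, w} := by
      rw [isol_isol, Set.singleton_union, hG'isol {u, w} (Or.inr (by right; rfl))]
    have e_2 : isol (isol G' {u}) {v} = isol G {u, v} := by
      rw [isol_isol, Set.singleton_union, hG'isol {u, v} (Or.inl (by right; rfl))]
    have e_3 : isol G' {v, w} = isol G {v, w} := hG'isol {v, w} (Or.inl (by left; rfl))
    rw [step1, step2, e_1, e_2, e_3]
  -- ============ decomposition of the double twin ============
  have hF11 : ∀ b, F p (twinG (twinG G v u) w u) {u, v, w} b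
      = F p (isol G {v, w}) {u, v, w} b *
        (F p (isol G {v, w}) {u, v, w} b * F p (isol G {v, w}) {u, v, w} b) := by
    intro b
    have step1 := F_prod hk2 p (twinG (twinG G v u) w u) {u, v, w} {u} {v, w}
      hsub_u_T hsub_vw_T hdisj_u_vw
      (by rintro a b hadj ha hb
          rw [Set.mem_singleton_iff] at ha
          simp only [Set.mem_insert_iff, Set.mem_singleton_iff] at hb
          subst ha
          rcases hb with rfl | rfl
          · exact hGvwu_uv hadj
          · exact hGvwu_uw hadj)
      (fun a b hadj ha => hiso_u_vw a b ha) b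
    have step2 := F_prod hk2 p (isol (twinG (twinG G v u) w u) {u}) {u, v, w} {v} {w}
      hsub_v_T hsub_w_T
      (by rintro x hx hy
          rw [Set.mem_singleton_iff] at hx hy
          exact hvw' (hx ▸ hy ▸ rfl))
      (by rintro a b hadj ha hb
          rw [Set.mem_singleton_iff] at ha hb
          rw [ha, hb] at hadj
          exact hGvwu_vw hadj.1)
      (by intro a b hadj ha
          simp only [Set.mem_insert_iff, Set.mem_singleton_iff] at ha ⊢
          rcases ha with rfl | rfl | rfl
          · exact (hadj.2.1 rfl).elim
          · exact Or.inl rfl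
          · exact Or.inr rfl) b
    have e_isol_uw : isol (isol (twinG (twinG G v u) w u) {u}) {w}
        = isol (twinG (twinG G v u) w u) {u, w} := by
      rw [isol_isol, Set.singleton_union]
    have e_isol_uv : isol (isol (twinG (twinG G v u) w u) {u}) {v}
        = isol (twinG (twinG G v u) w u) {u, v} := by
      rw [isol_isol, Set.singleton_union, Set.pair_comm]
    have e_1 : isol (twinG (twinG G v u) w u) {v, w} = isol G {v, w} := by
      apply isol_eq_of_agree
      intro a b ha hb
      simp only [Set.mem_insert_iff, Set.mem_singleton_iff, not_or] at ha hb
      rw [twinG_adj, if_neg ha.2, if_neg hb.2, twinG_adj, if_neg ha.1, if_neg hb.1]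
      constructor
      · rintro ⟨-, -, h⟩; exact h
      · intro h; exact ⟨h.ne, h.ne, h⟩
    have m_uw : F p (isol (twinG (twinG G v u) w u) {u, w}) {u, v, w} b
        = F p (isol G {v, w}) {u, v, w} b := by
      have edrop : isol (twinG (twinG G v u) w u) {u, w} = isol (twinG G v u) {u, w} := by
        apply isol_eq_of_agree
        intro a b ha hb
        simp only [Set.mem_insert_iff, Set.mem_singleton_iff, not_or] at ha hb
        rw [twinG_adj, if_neg ha.2, if_neg hb.2]
        constructor
        · rintro ⟨-, h⟩; exact h
        · intro h; exact ⟨h.ne, h⟩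
      rw [edrop]
      refine F_move p (isol G {v, w}) (isol (twinG G v u) {u, w}) {u, v, w}
        (Equiv.swap v u) ?_ ?_ b
      · intro x hx
        simp only [Set.mem_insert_iff, Set.mem_singleton_iff, not_or] at hx
        exact Equiv.swap_apply_of_ne_of_ne hx.2.1 hx.1
      · intro a b'
        exact twin_swap_adj G v u (Ne.symm huv') {w}
          (by simp [hvw']) (by simp [huw']) a b'
    have m_uv : F p (isol (twinG (twinG G v u) w u) {u, v}) {u, v, w} b
        = F p (isol G {v, w}) {u, v, w} b := by
      have h1 : F p (isol (twinG (twinG G v u) w u) {u, v}) {u, v, w} b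
          = F p (isol (twinG G v u) {w, v}) {u, v, w} b := by
        refine F_move p (isol (twinG G v u) {w, v}) (isol (twinG (twinG G v u) w u) {u, v})
          {u, v, w} (Equiv.swap w u) ?_ ?_ b
        · intro x hx
          simp only [Set.mem_insert_iff, Set.mem_singleton_iff, not_or] at hx
          exact Equiv.swap_apply_of_ne_of_ne hx.2.2 hx.1
        · intro a b'
          exact twin_swap_adj (twinG G v u) w u (Ne.symm huw') {v}
            (by simp [Ne.symm hvw']) (by simp [huv']) a b'
      have h2 : isol (twinG G v u) {w, v} = isol G {w, v} := by
        apply isol_eq_of_agree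
        intro a b ha hb
        simp only [Set.mem_insert_iff, Set.mem_singleton_iff, not_or] at ha hb
        rw [twinG_adj, if_neg ha.2, if_neg hb.2]
        constructor
        · rintro ⟨-, h⟩; exact h
        · intro h; exact ⟨h.ne, h⟩
      rw [h1, h2, Set.pair_comm w v]
    rw [step1, step2, e_isol_uw, e_isol_uv, m_uw, m_uv, e_1]
  -- ============ final counting ============
  have SG : colCount r p G = ∑ b : V → V → Fin r,
      F p (isol G {v, w}) {u, v, w} b * F p (isol G {v, w}) {u, v, w} b *
        F p (isol G {u, v}) {u, v, w} b := by
    rw [colCount_eq_sum_F p G {u, v, w}]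
    refine Finset.sum_congr rfl fun b _ => ?_
    rw [hF7 b, hq b, ← mul_assoc]
  have SZ : colCount r p G' = ∑ b : V → V → Fin r,
      F p (isol G {v, w}) {u, v, w} b *
        (F p (isol G {u, v}) {u, v, w} b * F p (isol G {u, v}) {u, v, w} b) := by
    rw [colCount_eq_sum_F p G' {u, v, w}]
    refine Finset.sum_congr rfl fun b _ => ?_
    rw [hF10 b]
    have hsvw : F p (isol G {v, w}) {u, v, w} b * F p (isol G {u, w}) {u, v, w} b
        = F p (isol G {v, w}) {u, v, w} b * F p (isol G {u, v}) {u, v, w} b :=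
      (hq' b).symm.trans (hq b)
    calc F p (isol G {v, w}) {u, v, w} b *
          (F p (isol G {u, w}) {u, v, w} b * F p (isol G {u, v}) {u, v, w} b)
        = (F p (isol G {v, w}) {u, v, w} b * F p (isol G {u, w}) {u, v, w} b) *
            F p (isol G {u, v}) {u, v, w} b := (mul_assoc _ _ _).symm
      _ = (F p (isol G {v, w}) {u, v, w} b * F p (isol G {u, v}) {u, v, w} b) *
            F p (isol G {u, v}) {u, v, w} b := by rw [hsvw]
      _ = F p (isol G {v, w}) {u, v, w} b *
            (F p (isol G {u, v}) {u, v, w} b * F p (isol G {u, v}) {u, v, w} b) :=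
          mul_assoc _ _ _
  have SC : colCount r p (twinG (twinG G v u) w u) = ∑ b : V → V → Fin r,
      F p (isol G {v, w}) {u, v, w} b *
        (F p (isol G {v, w}) {u, v, w} b * F p (isol G {v, w}) {u, v, w} b) := by
    rw [colCount_eq_sum_F p (twinG (twinG G v u) w u) {u, v, w}]
    exact Finset.sum_congr rfl fun b _ => hF11 b
  have hkey : colCount r p G ≤ colCount r p G' := by
    rw [SG, SZ]
    refine final_le (fun b => F p (isol G {v, w}) {u, v, w} b)
      (fun b => F p (isol G {u, v}) {u, v, w} b) ?_
    rw [← SC, ← SG]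
    exact hext' _
  intro H
  exact (hext H).trans hkey
end

section
/- Let G be a graph on t > 1000 vertices, let e₂ be the number of edges of G contained in some triangle of G, let e₃ be the number of edges of G contained in no triangle of G, and let ē be the number of edges of the complement of G. If ē ≤ t²/4, then w(G) = 2^{e₂}·3^{e₃} ≤ 2^{t(t−1)/2}·2^{−0.16·ē}. Furthermore, if ē > t²/4, then w(G) < 3^{t²/4}. -/
open SimpleGraph

open Classical in
/-- `w(G)`: the product, over all edges `e` of `G`, of the weight of `e`, where an edge
weighs `2` if it lies in some triangle of `G` and `3` otherwise. -/
noncomputable def graphWeight {V : Type*} [Fintype V] (G : SimpleGraph V) : ℕ :=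
  ∏ e ∈ G.edgeFinset, if ∃ x, ∀ y ∈ e, G.Adj x y then 2 else 3

/-- The number of edges of `G` lying in some triangle of `G`. -/
noncomputable def triEdgeCount {V : Type*} (G : SimpleGraph V) : ℕ :=
  {e ∈ G.edgeSet | ∃ x, ∀ y ∈ e, G.Adj x y}.ncard

/-- The number of edges of `G` lying in no triangle of `G`. -/
noncomputable def nonTriEdgeCount {V : Type*} (G : SimpleGraph V) : ℕ :=
  {e ∈ G.edgeSet | ¬ ∃ x, ∀ y ∈ e, G.Adj x y}.ncard

set_option linter.unusedSectionVars false
set_option maxHeartbeats 1000000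
open Finset
open scoped Classical

section Helpers
variable {V : Type*} [Fintype V] (G : SimpleGraph V)


/-- Subgraph of edges lying in no triangle. -/
def triFreePart : SimpleGraph V where
  Adj u v := G.Adj u v ∧ ¬ ∃ x, G.Adj x u ∧ G.Adj x v
  symm := by constructor; intro u v ⟨h1, h2⟩; exact ⟨h1.symm, fun ⟨x, hx⟩ => h2 ⟨x, hx.symm⟩⟩
  loopless := by constructor; intro v ⟨h, _⟩; exact G.irrefl h

lemma triFreePart_le : triFreePart G ≤ G := fun _ _ h => h.1

lemma triFreePart_edgeSet :
    (triFreePart G).edgeSet = {e ∈ G.edgeSet | ¬ ∃ x, ∀ y ∈ e, G.Adj x y} := by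
  ext e
  induction e with
  | _ u v =>
    simp only [mem_edgeSet, Set.mem_setOf_eq, triFreePart]
    constructor
    · rintro ⟨h1, h2⟩
      exact ⟨h1, fun ⟨x, hx⟩ => h2 ⟨x, hx u (by simp), hx v (by simp)⟩⟩
    · rintro ⟨h1, h2⟩
      refine ⟨h1, fun ⟨x, hxu, hxv⟩ => h2 ⟨x, ?_⟩⟩
      intro y hy
      rcases Sym2.mem_iff.mp hy with rfl | rfl
      · exact hxu
      · exact hxv

lemma nonTriEdgeCount_eq : nonTriEdgeCount G = #(triFreePart G).edgeFinset := by
  rw [nonTriEdgeCount, ← triFreePart_edgeSet, ← coe_edgeFinset, Set.ncard_coe_finset]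

lemma triEdgeCount_eq :
    triEdgeCount G = #(G.edgeFinset.filter fun e => ∃ x, ∀ y ∈ e, G.Adj x y) := by
  rw [triEdgeCount, ← Set.ncard_coe_finset]
  congr 1
  ext e
  simp [Set.mem_setOf_eq]

lemma nonTriEdgeCount_eq_filter :
    nonTriEdgeCount G = #(G.edgeFinset.filter fun e => ¬ ∃ x, ∀ y ∈ e, G.Adj x y) := by
  rw [nonTriEdgeCount, ← Set.ncard_coe_finset]
  congr 1
  ext e
  simp [Set.mem_setOf_eq]

lemma graphWeight_eq : graphWeight G = 2 ^ triEdgeCount G * 3 ^ nonTriEdgeCount G := by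
  rw [graphWeight, Finset.prod_ite, Finset.prod_const, Finset.prod_const,
    triEdgeCount_eq, nonTriEdgeCount_eq_filter]

lemma count_split :
    triEdgeCount G + nonTriEdgeCount G = #G.edgeFinset := by
  rw [triEdgeCount_eq, nonTriEdgeCount_eq_filter]
  exact Finset.card_filter_add_card_filter_not _

lemma card_edge_add_compl :
    (#G.edgeFinset + #Gᶜ.edgeFinset) = (Fintype.card V).choose 2 := by
  classical
  rw [← card_edgeFinset_top_eq_card_choose_two (V := V)]
  rw [← card_union_of_disjoint (by
    rw [Finset.disjoint_left]
    intro e he he'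
    rw [mem_edgeFinset] at he he'
    have := (edgeSet_inf (G₁ := G) (G₂ := Gᶜ)) ▸ Set.mem_inter he he'
    rw [inf_compl_eq_bot, edgeSet_bot] at this
    exact this)]
  congr 1
  ext e
  induction e with
  | _ u v =>
    simp only [Finset.mem_union, mem_edgeFinset, mem_edgeSet, compl_adj, top_adj]
    have hne : G.Adj u v → u ≠ v := G.ne_of_adj
    tauto



lemma compl_deg_sum {u v : V} (h : G.Adj u v) (hno : ¬ ∃ x, G.Adj x u ∧ G.Adj x v) :
    Fintype.card V - 2 ≤ Gᶜ.degree u + Gᶜ.degree v := by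
  classical
  have hsub : (Finset.univ \ {u, v} : Finset V) ⊆ Gᶜ.neighborFinset u ∪ Gᶜ.neighborFinset v := by
    intro w hw
    simp only [Finset.mem_sdiff, Finset.mem_insert, Finset.mem_singleton, Finset.mem_univ,
      true_and, not_or] at hw
    obtain ⟨hwu, hwv⟩ := hw
    have : ¬ (G.Adj w u ∧ G.Adj w v) := fun hc => hno ⟨w, hc⟩
    simp only [Finset.mem_union, mem_neighborFinset, compl_adj]
    by_cases h1 : G.Adj u w
    · exact Or.inr ⟨fun e => hwv e.symm, fun h2 => this ⟨h1.symm, h2.symm⟩⟩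
    · exact Or.inl ⟨fun e => hwu e.symm, fun h2 => h1 h2⟩
  calc Fintype.card V - 2 = #(Finset.univ \ ({u, v} : Finset V)) := by
        rw [Finset.card_sdiff_of_subset (by simp)]
        simp [Finset.card_insert_of_notMem, G.ne_of_adj h]
    _ ≤ #(Gᶜ.neighborFinset u ∪ Gᶜ.neighborFinset v) := Finset.card_le_card hsub
    _ ≤ _ := by
        calc #(Gᶜ.neighborFinset u ∪ Gᶜ.neighborFinset v)
            ≤ #(Gᶜ.neighborFinset u) + #(Gᶜ.neighborFinset v) := Finset.card_union_le _ _
          _ = _ := by rw [card_neighborFinset_eq_degree, card_neighborFinset_eq_degree]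

lemma compl_deg_le {v : V} (h : ∃ w, G.Adj v w) :
    Gᶜ.degree v ≤ Fintype.card V - 2 := by
  classical
  have h1 : 1 ≤ G.degree v := (G.degree_pos_iff_exists_adj v).mpr h
  have h2 : Gᶜ.degree v = Fintype.card V - 1 - G.degree v := G.degree_compl v
  omega

lemma triFreePart_deg_le (v : V) : (triFreePart G).degree v ≤ G.degree v := by
  classical
  apply Finset.card_le_card
  intro w hw
  rw [mem_neighborFinset] at hw ⊢
  exact hw.1

lemma dart_sum_fst (H : SimpleGraph V) (f : V → ℝ) :
    ∑ d : H.Dart, f d.fst = ∑ v, (H.degree v : ℝ) * f v := by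
  classical
  rw [← Finset.sum_fiberwise_of_maps_to' (g := fun d : H.Dart => d.fst) (t := Finset.univ)
      (fun d _ => Finset.mem_univ _) f]
  refine Finset.sum_congr rfl fun v _ => ?_
  rw [Finset.sum_const, ← dart_fst_fiber_card_eq_degree]
  simp [mul_comm]

lemma dart_sum_snd (H : SimpleGraph V) (f : V → ℝ) :
    ∑ d : H.Dart, f d.snd = ∑ d : H.Dart, f d.fst := by
  classical
  exact Fintype.sum_bijective Dart.symm (Dart.symm_involutive.bijective) _ _ (fun d => by
    simp [Dart.symm])

lemma key_ineq (ht : 1000 < Fintype.card V) :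
    ((Fintype.card V : ℝ) - 2) * #(triFreePart G).edgeFinset ≤
      (Fintype.card V : ℝ) * #Gᶜ.edgeFinset := by
  classical
  set t := Fintype.card V with htdef
  have htR : (1001 : ℝ) ≤ (t : ℝ) := by exact_mod_cast ht
  set F := triFreePart G with hF
  set f : V → ℝ := fun v => (Gᶜ.degree v : ℝ) / ((t : ℝ) - 1 - Gᶜ.degree v) with hf
  -- per-vertex bound
  have hvert : ∀ v, (F.degree v : ℝ) * f v ≤ (Gᶜ.degree v : ℝ) := by
    intro v
    have hdlt : Gᶜ.degree v < t := Gᶜ.degree_lt_card_verts v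
    have hcompl : Gᶜ.degree v = t - 1 - G.degree v := G.degree_compl v
    have hdegF : F.degree v ≤ G.degree v := triFreePart_deg_le G v
    have hdeglt : G.degree v < t := G.degree_lt_card_verts v
    by_cases hcase : Gᶜ.degree v = t - 1
    · have hdeg0 : G.degree v = 0 := by omega
      have : F.degree v = 0 := by omega
      rw [this]
      simp [f]
    · have hle : Gᶜ.degree v + 2 ≤ t := by omega
      have hden : (1 : ℝ) ≤ (t : ℝ) - 1 - Gᶜ.degree v := by
        have : ((Gᶜ.degree v + 2 : ℕ) : ℝ) ≤ (t : ℝ) := by exact_mod_cast hle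
        push_cast at this
        linarith
      have hdenpos : (0 : ℝ) < (t : ℝ) - 1 - Gᶜ.degree v := by linarith
      have hFdegR : (F.degree v : ℝ) ≤ (t : ℝ) - 1 - Gᶜ.degree v := by
        have h2 : F.degree v + Gᶜ.degree v + 1 ≤ t := by omega
        have : ((F.degree v + Gᶜ.degree v + 1 : ℕ) : ℝ) ≤ (t : ℝ) := by exact_mod_cast h2
        push_cast at this
        linarith
      have hf0 : 0 ≤ f v := by
        apply div_nonneg _ (le_of_lt hdenpos)
        positivity
      calc (F.degree v : ℝ) * f v ≤ ((t : ℝ) - 1 - Gᶜ.degree v) * f v :=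
            mul_le_mul_of_nonneg_right hFdegR hf0
        _ = (Gᶜ.degree v : ℝ) := by
            rw [hf]
            field_simp
  -- per-dart bound
  have hdart : ∀ d : F.Dart, 2 * ((t : ℝ) - 2) / t ≤ f d.fst + f d.snd := by
    intro d
    obtain ⟨hadj, hno⟩ := d.adj
    have hsum : t - 2 ≤ Gᶜ.degree d.fst + Gᶜ.degree d.snd := compl_deg_sum G hadj hno
    have hu : Gᶜ.degree d.fst ≤ t - 2 := compl_deg_le G ⟨d.snd, hadj⟩
    have hv : Gᶜ.degree d.snd ≤ t - 2 := compl_deg_le G ⟨d.fst, hadj.symm⟩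
    set a := (Gᶜ.degree d.fst : ℝ) with ha
    set b := (Gᶜ.degree d.snd : ℝ) with hb
    have ha0 : 0 ≤ a := by positivity
    have hb0 : 0 ≤ b := by positivity
    have haR : a ≤ (t : ℝ) - 2 := by
      have : ((Gᶜ.degree d.fst + 2 : ℕ) : ℝ) ≤ (t : ℝ) := by exact_mod_cast (by omega : Gᶜ.degree d.fst + 2 ≤ t)
      push_cast at this; linarith
    have hbR : b ≤ (t : ℝ) - 2 := by
      have : ((Gᶜ.degree d.snd + 2 : ℕ) : ℝ) ≤ (t : ℝ) := by exact_mod_cast (by omega : Gᶜ.degree d.snd + 2 ≤ t)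
      push_cast at this; linarith
    have habR : (t : ℝ) - 2 ≤ a + b := by
      have h2 : ((t : ℕ) : ℝ) - 2 ≤ ((Gᶜ.degree d.fst + Gᶜ.degree d.snd : ℕ) : ℝ) := by
        have := hsum
        have h3 : t ≤ Gᶜ.degree d.fst + Gᶜ.degree d.snd + 2 := by omega
        have h4 : ((t : ℕ) : ℝ) ≤ ((Gᶜ.degree d.fst + Gᶜ.degree d.snd + 2 : ℕ) : ℝ) := by
          exact_mod_cast h3
        push_cast at h4 ⊢
        linarith
      push_cast at h2
      linarith
    have hda : (0 : ℝ) < (t : ℝ) - 1 - a := by linarith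
    have hdb : (0 : ℝ) < (t : ℝ) - 1 - b := by linarith
    have htpos : (0 : ℝ) < (t : ℝ) := by linarith
    show 2 * ((t : ℝ) - 2) / t ≤ a / ((t : ℝ) - 1 - a) + b / ((t : ℝ) - 1 - b)
    rw [div_add_div _ _ (ne_of_gt hda) (ne_of_gt hdb), div_le_div_iff₀ htpos (by positivity)]
    nlinarith [mul_nonneg (by linarith : (0:ℝ) ≤ a + b - ((t:ℝ) - 2))
        (by linarith : (0:ℝ) ≤ 2*(t:ℝ) - 2 - a - b), sq_nonneg (a - b),
      mul_nonneg (mul_nonneg (by linarith : (0:ℝ) ≤ (t:ℝ) - 1)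
        (by linarith : (0:ℝ) ≤ a + b - ((t:ℝ) - 2))) (by linarith : (0:ℝ) ≤ 2*(t:ℝ) - 2 - a - b),
      mul_nonneg (by linarith : (0:ℝ) ≤ (t:ℝ) - 1) (sq_nonneg (a - b))]
  -- sum it all
  have hsum1 : ∑ d : F.Dart, (f d.fst + f d.snd) = 2 * ∑ v, (F.degree v : ℝ) * f v := by
    rw [Finset.sum_add_distrib, dart_sum_snd, dart_sum_fst]
    ring
  have hcard : (Fintype.card F.Dart : ℝ) = 2 * #F.edgeFinset := by
    exact_mod_cast congrArg (Nat.cast : ℕ → ℝ) F.dart_card_eq_twice_card_edges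
  have hlow : (Fintype.card F.Dart : ℝ) * (2 * ((t : ℝ) - 2) / t) ≤
      ∑ d : F.Dart, (f d.fst + f d.snd) := by
    rw [← Finset.card_univ, ← nsmul_eq_mul]
    exact Finset.card_nsmul_le_sum _ _ _ (fun d _ => hdart d)
  have hhigh : ∑ v, (F.degree v : ℝ) * f v ≤ 2 * #Gᶜ.edgeFinset := by
    calc ∑ v, (F.degree v : ℝ) * f v ≤ ∑ v, (Gᶜ.degree v : ℝ) :=
          Finset.sum_le_sum (fun v _ => hvert v)
      _ = 2 * #Gᶜ.edgeFinset := by exact_mod_cast Gᶜ.sum_degrees_eq_twice_card_edges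
  have htpos : (0 : ℝ) < (t : ℝ) := by linarith
  have hfinal : (2 * (#F.edgeFinset : ℝ)) * (2 * ((t : ℝ) - 2) / t) ≤ 4 * #Gᶜ.edgeFinset := by
    rw [← hcard]
    calc (Fintype.card F.Dart : ℝ) * (2 * ((t : ℝ) - 2) / t) ≤ ∑ d : F.Dart, (f d.fst + f d.snd) := hlow
      _ = 2 * ∑ v, (F.degree v : ℝ) * f v := hsum1
      _ ≤ 2 * (2 * #Gᶜ.edgeFinset) := by linarith
      _ = 4 * #Gᶜ.edgeFinset := by ring
  have h5 : (2 * (#F.edgeFinset : ℝ)) * (2 * ((t : ℝ) - 2) / t) =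
      4 * (((t : ℝ) - 2) * #F.edgeFinset) / t := by ring
  rw [h5] at hfinal
  rw [div_le_iff₀ htpos] at hfinal
  nlinarith [hfinal]

end Helpers

section FinalAssembly
open Real

/-- Let `G` be a graph on `t > 1000` vertices, `e₂` its number of edges in some triangle,
`e₃` its number of edges in no triangle, and `ē` the number of edges of its complement.
If `ē ≤ t²/4` then `w(G) = 2^e₂ · 3^e₃ ≤ 2^(t(t-1)/2) · 2^(-0.16·ē)`; furthermore, if
`ē > t²/4` then `w(G) < 3^(t²/4)`. -/
theorem statement9 {V : Type*} [Fintype V] (G : SimpleGraph V)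
    (ht : 1000 < Fintype.card V) :
    (((Gᶜ.edgeSet.ncard : ℝ) ≤ (Fintype.card V : ℝ) ^ 2 / 4) →
      (graphWeight G : ℝ) = 2 ^ triEdgeCount G * 3 ^ nonTriEdgeCount G ∧
      (graphWeight G : ℝ) ≤
        2 ^ (Fintype.card V * (Fintype.card V - 1) / 2) *
          (2 : ℝ) ^ (-(0.16 : ℝ) * (Gᶜ.edgeSet.ncard : ℝ))) ∧
    (((Gᶜ.edgeSet.ncard : ℝ) > (Fintype.card V : ℝ) ^ 2 / 4) →
      (graphWeight G : ℝ) < (3 : ℝ) ^ ((Fintype.card V : ℝ) ^ 2 / 4)) := by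
  classical
  set t := Fintype.card V with htdef
  have htR : (1001 : ℝ) ≤ (t : ℝ) := by exact_mod_cast ht
  set e₂ := triEdgeCount G with he₂def
  set e₃ := nonTriEdgeCount G with he₃def
  have hbarF : Gᶜ.edgeSet.ncard = #Gᶜ.edgeFinset := by
    rw [← coe_edgeFinset, Set.ncard_coe_finset]
  set eb := #Gᶜ.edgeFinset with hebdef
  have hEnat : e₂ + e₃ + eb = t * (t - 1) / 2 := by
    rw [he₂def, he₃def, count_split, hebdef, card_edge_add_compl, Nat.choose_two_right]
  have hweq : (graphWeight G : ℝ) = 2 ^ e₂ * 3 ^ e₃ := by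
    rw [graphWeight_eq]; push_cast; ring
  -- key combinatorial inequality
  have hkey : ((t : ℝ) - 2) * (e₃ : ℝ) ≤ (t : ℝ) * (eb : ℝ) := by
    have := key_ineq G ht
    rwa [← nonTriEdgeCount_eq] at this
  have heb0 : (0 : ℝ) ≤ (eb : ℝ) := by positivity
  have he₃0 : (0 : ℝ) ≤ (e₃ : ℝ) := by positivity
  constructor
  · intro _
    refine ⟨hweq, ?_⟩
    rw [hweq, hbarF]
    set E := t * (t - 1) / 2 with hEdef
    have hEc : (e₂ : ℝ) + e₃ + eb = E := by exact_mod_cast hEnat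
    have hL : (0 : ℝ) < 2 ^ e₂ * 3 ^ e₃ := by positivity
    have hrp : (0 : ℝ) < (2 : ℝ) ^ (-(0.16 : ℝ) * (eb : ℝ)) :=
      Real.rpow_pos_of_pos (by norm_num) _
    have hR : (0 : ℝ) < (2 : ℝ) ^ E * (2 : ℝ) ^ (-(0.16 : ℝ) * (eb : ℝ)) := by positivity
    rw [← Real.log_le_log_iff hL hR, Real.log_mul (by positivity) (by positivity),
      Real.log_mul (by positivity) (ne_of_gt hrp), Real.log_pow, Real.log_pow, Real.log_pow,
      Real.log_rpow (by norm_num)]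
    set L2 := Real.log 2 with hL2def
    set L3 := Real.log 3 with hL3def
    have hL20 : (0 : ℝ) < L2 := Real.log_pos (by norm_num)
    have hnum : 6 * L3 ≤ 11 * L2 := by
      have h1 : Real.log ((3 : ℝ) ^ (6 : ℕ)) ≤ Real.log ((2 : ℝ) ^ (11 : ℕ)) :=
        Real.log_le_log (by positivity) (by norm_num)
      rw [Real.log_pow, Real.log_pow] at h1
      push_cast at h1
      linarith
    have hA : ((t : ℝ) - 2) * (5 * (e₃ : ℝ)) ≤ ((t : ℝ) - 2) * (5.04 * (eb : ℝ)) := by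
      nlinarith [mul_nonneg (show (0 : ℝ) ≤ 0.04 * (t : ℝ) - 10.08 by linarith) heb0]
    have h1 : 5 * (e₃ : ℝ) ≤ 5.04 * (eb : ℝ) :=
      le_of_mul_le_mul_left hA (by linarith)
    have h2 : (e₃ : ℝ) * (6 * L3) ≤ (e₃ : ℝ) * (11 * L2) :=
      mul_le_mul_of_nonneg_left hnum he₃0
    have h3 : (5 * (e₃ : ℝ)) * L2 ≤ (5.04 * (eb : ℝ)) * L2 :=
      mul_le_mul_of_nonneg_right h1 (le_of_lt hL20)
    have he₂L2 : (e₂ : ℝ) * L2 = ((E : ℝ) - e₃ - eb) * L2 := by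
      rw [show (e₂ : ℝ) = (E : ℝ) - e₃ - eb from by linarith]
    nlinarith [h2, h3, he₂L2]
  · intro hbar
    rw [hbarF] at hbar
    have hwle : graphWeight G ≤ 3 ^ (e₂ + e₃) := by
      rw [graphWeight_eq, pow_add]
      exact Nat.mul_le_mul_right _ (Nat.pow_le_pow_left (by norm_num) _)
    have hm : ((e₂ + e₃ : ℕ) : ℝ) < (t : ℝ) ^ 2 / 4 := by
      have hc : ((e₂ + e₃ + eb : ℕ) : ℝ) = (t.choose 2 : ℝ) := by
        rw [hEnat, Nat.choose_two_right]
      rw [Nat.cast_choose_two] at hc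
      push_cast at hc ⊢
      nlinarith
    calc (graphWeight G : ℝ) ≤ ((3 ^ (e₂ + e₃) : ℕ) : ℝ) := by exact_mod_cast hwle
      _ = (3 : ℝ) ^ ((e₂ + e₃ : ℕ) : ℝ) := by
          rw [Real.rpow_natCast]; push_cast; ring
      _ < (3 : ℝ) ^ ((t : ℝ) ^ 2 / 4) :=
          Real.rpow_lt_rpow_of_exponent_lt (by norm_num) hm

end FinalAssembly
end

section
/- Let G be a graph on t > 1000 vertices whose complement has ē edges with ē ≤ t²/4. Then the number of edges of G that are not contained in any triangle of G is at most (√2 + 0.01)·ē. -/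
open SimpleGraph

section Aux
open Finset

variable {V : Type*}

/-- The graph whose edges are the edges of `G` lying in no triangle of `G`. -/
private def ntGraph (G : SimpleGraph V) : SimpleGraph V where
  Adj u v := G.Adj u v ∧ ¬ ∃ x, G.Adj x u ∧ G.Adj x v
  symm := by
    constructor
    rintro u v ⟨h, hn⟩
    exact ⟨h.symm, fun ⟨x, hx⟩ => hn ⟨x, hx.2, hx.1⟩⟩
  loopless := ⟨fun v h => G.loopless.irrefl v h.1⟩

private lemma ntGraph_edgeSet (G : SimpleGraph V) :
    (ntGraph G).edgeSet = {e ∈ G.edgeSet | ¬ ∃ x, ∀ y ∈ e, G.Adj x y} := by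
  ext e
  induction e using Sym2.ind with
  | _ u v =>
    simp only [mem_edgeSet, Set.mem_setOf_eq, ntGraph]
    constructor
    · rintro ⟨h, hn⟩
      exact ⟨h, fun ⟨x, hx⟩ => hn ⟨x, hx u (Sym2.mem_iff.mpr (Or.inl rfl)),
        hx v (Sym2.mem_iff.mpr (Or.inr rfl))⟩⟩
    · rintro ⟨h, hn⟩
      refine ⟨h, fun ⟨x, hx⟩ => hn ⟨x, fun y hy => ?_⟩⟩
      rcases Sym2.mem_iff.mp hy with rfl | rfl
      exacts [hx.1, hx.2]

end Aux

open Finset in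
/-- If `G` is a graph on `t > 1000` vertices whose complement has `ē ≤ t²/4` edges, then the
number of edges of `G` contained in no triangle of `G` is at most `(√2 + 0.01) · ē`. -/
theorem statement10 {V : Type*} [Fintype V] (G : SimpleGraph V)
    (ht : 1000 < Fintype.card V)
    (hbar : (Gᶜ.edgeSet.ncard : ℝ) ≤ (Fintype.card V : ℝ) ^ 2 / 4) :
    (nonTriEdgeCount G : ℝ) ≤ (Real.sqrt 2 + 0.01) * (Gᶜ.edgeSet.ncard : ℝ) := by
  classical
  set t : ℕ := Fintype.card V with htdef
  set H : SimpleGraph V := ntGraph G with hHdef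
  -- identifications of the counts with edgeFinset cards
  have hm : nonTriEdgeCount G = #H.edgeFinset := by
    rw [nonTriEdgeCount, ← ntGraph_edgeSet, ← coe_edgeFinset, Set.ncard_coe_finset]
  have hebar : Gᶜ.edgeSet.ncard = #Gᶜ.edgeFinset := by
    rw [← coe_edgeFinset, Set.ncard_coe_finset]
  set mn : ℕ := #H.edgeFinset with hmn
  set en : ℕ := #Gᶜ.edgeFinset with hen
  -- the ordered-pairs finsets
  set T : Finset (V × V) := univ.filter fun (x, y) => Gᶜ.Adj x y with hTdef
  set TH : Finset (V × V) := univ.filter fun (x, y) => H.Adj x y with hTHdef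
  set Q : Finset (V × V × V) :=
    univ.filter fun q => H.Adj q.1 q.2.1 ∧ q.2.2 ≠ q.1 ∧ q.2.2 ≠ q.2.1 with hQdef
  have hT : #T = 2 * en := (two_mul_card_edgeFinset Gᶜ).symm
  have hTH : #TH = 2 * mn := (two_mul_card_edgeFinset H).symm
  -- H-neighborhoods are cliques in the complement: degree bound
  have hdeg : ∀ a : V, H.degree a * H.degree a - H.degree a ≤ #T := by
    intro a
    have hsub : (H.neighborFinset a).offDiag ⊆ T := by
      rintro ⟨v, w⟩ hvw
      simp only [Finset.mem_offDiag, mem_neighborFinset] at hvw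
      obtain ⟨hv, hw, hne⟩ := hvw
      simp only [hTdef, mem_filter, mem_univ, true_and, compl_adj]
      exact ⟨hne, fun hadj => hv.2 ⟨w, hw.1.symm, hadj.symm⟩⟩
    have := Finset.card_le_card hsub
    rwa [Finset.offDiag_card, card_neighborFinset_eq_degree] at this
  -- first double count : #Q ≥ #TH * (t - 2)
  have hmapTH : ∀ q ∈ Q, (q.1, q.2.1) ∈ TH := by
    intro q hq
    simp only [hQdef, mem_filter, mem_univ, true_and] at hq
    simp only [hTHdef, mem_filter, mem_univ, true_and]
    exact hq.1
  have hQ1 : #TH * (t - 2) ≤ #Q := by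
    rw [Finset.card_eq_sum_card_fiberwise hmapTH]
    have := Finset.card_nsmul_le_sum TH
      (fun p => #(Q.filter fun q => (q.1, q.2.1) = p)) (t - 2) ?_
    · simpa [smul_eq_mul] using this
    · rintro ⟨u, v⟩ hp
      simp only [hTHdef, mem_filter, mem_univ, true_and] at hp
      have huv : u ≠ v := hp.ne
      have hcard : #(univ \ {u, v} : Finset V) = t - 2 := by
        rw [Finset.card_sdiff_of_subset (Finset.subset_univ _), Finset.card_univ,
          Finset.card_pair huv]
      rw [← hcard]
      apply Finset.card_le_card_of_injOn (fun w => (u, v, w))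
      · intro w hw
        simp only [Finset.mem_coe, Finset.mem_sdiff, Finset.mem_insert, Finset.mem_singleton] at hw
        push_neg at hw
        refine Finset.mem_filter.mpr ⟨?_, rfl⟩
        simp only [hQdef, Finset.mem_filter, Finset.mem_univ, true_and]
        exact ⟨hp, hw.2.1, hw.2.2⟩
      · intro a _ b _ hab
        simpa using congrArg (fun p => p.2.2) hab
  -- second double count : each element of Q maps to a complement edge
  set f : V × V × V → V × V := fun q => (if G.Adj q.1 q.2.2 then q.2.1 else q.1, q.2.2)
    with hfdef
  have hmapT : ∀ q ∈ Q, f q ∈ T := by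
    rintro ⟨u, v, w⟩ hq
    simp only [hQdef, mem_filter, mem_univ, true_and] at hq
    obtain ⟨huv, hwu, hwv⟩ := hq
    simp only [hTdef, hfdef, mem_filter, mem_univ, true_and, compl_adj]
    by_cases h : G.Adj u w
    · simp only [if_pos h]
      exact ⟨hwv.symm, fun hadj => huv.2 ⟨w, h.symm, hadj.symm⟩⟩
    · simp only [if_neg h]
      exact ⟨hwu.symm, h⟩
  have hfiber : ∀ p ∈ T, #(Q.filter fun q => f q = p) ≤ 2 * H.degree p.1 := by
    rintro ⟨a, b⟩ _
    have hsub : (Q.filter fun q => f q = (a, b)) ⊆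
        ((H.neighborFinset a).image fun v => (a, v, b)) ∪
        ((H.neighborFinset a).image fun u => (u, a, b)) := by
      rintro ⟨u, v, w⟩ hq
      simp only [Finset.mem_filter, hQdef, hfdef, mem_univ, true_and, Prod.mk.injEq] at hq
      obtain ⟨⟨huv, hwu, hwv⟩, hfst, hsnd⟩ := hq
      subst hsnd
      simp only [Finset.mem_union, Finset.mem_image, mem_neighborFinset]
      by_cases h : G.Adj u w
      · rw [if_pos h] at hfst
        subst hfst
        exact Or.inr ⟨u, huv.symm, rfl⟩
      · rw [if_neg h] at hfst
        subst hfst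
        exact Or.inl ⟨v, huv, rfl⟩
    calc #(Q.filter fun q => f q = (a, b)) ≤ _ := Finset.card_le_card hsub
      _ ≤ #((H.neighborFinset a).image fun v => (a, v, b)) +
          #((H.neighborFinset a).image fun u => (u, a, b)) := Finset.card_union_le _ _
      _ ≤ H.degree a + H.degree a := by
          gcongr <;> simpa [card_neighborFinset_eq_degree] using
            Finset.card_image_le (s := H.neighborFinset a) ..
      _ = 2 * H.degree a := (two_mul _).symm
  -- pass to the reals
  set e : ℝ := (en : ℝ) with hedef
  have he0 : (0 : ℝ) ≤ e := Nat.cast_nonneg _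
  set s : ℝ := Real.sqrt (2 * e) with hsdef
  have hs0 : (0 : ℝ) ≤ s := Real.sqrt_nonneg _
  have hs2 : s ^ 2 = 2 * e := Real.sq_sqrt (by linarith)
  -- real degree bound
  have hdegR : ∀ a : V, (H.degree a : ℝ) ≤ 1 + s := by
    intro a
    have h1 := hdeg a
    rw [hT] at h1
    rcases Nat.eq_zero_or_pos (H.degree a) with h0 | h0
    · rw [h0]; push_cast; linarith
    · have h2 : ((H.degree a : ℝ) - 1) ^ 2 ≤ 2 * e := by
        have h3 : ((H.degree a * H.degree a - H.degree a : ℕ) : ℝ)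
            = (H.degree a : ℝ) * H.degree a - H.degree a := by
          push_cast [Nat.cast_sub (Nat.le_mul_of_pos_left _ h0)]
          ring
        have h4 : ((H.degree a * H.degree a - H.degree a : ℕ) : ℝ) ≤ 2 * e := by
          rw [hedef]; exact_mod_cast h1
        have h5 : (1 : ℝ) ≤ (H.degree a : ℝ) := by exact_mod_cast h0
        nlinarith
      have h5 : (1 : ℝ) ≤ (H.degree a : ℝ) := by exact_mod_cast h0
      have h6 : (H.degree a : ℝ) - 1 ≤ s := by
        have h7 := Real.sqrt_le_sqrt h2
        rwa [Real.sqrt_sq (by linarith : (0:ℝ) ≤ (H.degree a : ℝ) - 1)] at h7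
      linarith
  -- assemble : 2 mn (t-2) ≤ #Q ≤ #T * (2 (1+s)) = 4 en (1+s)
  have hQ2 : (#Q : ℝ) ≤ (#T : ℝ) * (2 * (1 + s)) := by
    rw [Finset.card_eq_sum_card_fiberwise hmapT]
    push_cast
    calc (∑ p ∈ T, (#(Q.filter fun q => f q = p) : ℝ))
        ≤ ∑ p ∈ T, 2 * (1 + s) := by
          apply Finset.sum_le_sum
          intro p hp
          calc (#(Q.filter fun q => f q = p) : ℝ) ≤ (2 * H.degree p.1 : ℕ) := by
                exact_mod_cast hfiber p hp
            _ ≤ 2 * (1 + s) := by push_cast; linarith [hdegR p.1]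
      _ = (#T : ℝ) * (2 * (1 + s)) := by rw [Finset.sum_const, nsmul_eq_mul]
  have ht2 : 2 ≤ t := by omega
  have hQ1R : 2 * (mn : ℝ) * ((t : ℝ) - 2) ≤ (#Q : ℝ) := by
    have := hQ1
    rw [hTH] at this
    calc 2 * (mn : ℝ) * ((t : ℝ) - 2) = ((2 * mn * (t - 2) : ℕ) : ℝ) := by
          push_cast [Nat.cast_sub ht2]; ring
      _ ≤ (#Q : ℝ) := by exact_mod_cast this
  have hkey : (mn : ℝ) * ((t : ℝ) - 2) ≤ 2 * e * (1 + s) := by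
    have h8 : (#T : ℝ) = 2 * e := by rw [hT, hedef]; push_cast; ring
    rw [h8] at hQ2
    linarith [hQ1R, hQ2]
  -- final arithmetic
  set r : ℝ := Real.sqrt 2 with hrdef
  have hr0 : (0 : ℝ) ≤ r := Real.sqrt_nonneg _
  have hr2 : r ^ 2 = 2 := Real.sq_sqrt (by norm_num)
  have htR : (1000 : ℝ) < (t : ℝ) := by exact_mod_cast ht
  have hbar' : e ≤ (t : ℝ) ^ 2 / 4 := by rw [hedef, ← hebar]; exact hbar
  have hsr : s * r ≤ (t : ℝ) := by
    have hsq : (s * r) ^ 2 ≤ ((t : ℝ)) ^ 2 := by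
      have : (s * r) ^ 2 = 4 * e := by rw [mul_pow, hs2, hr2]; ring
      rw [this]; linarith
    have h := Real.sqrt_le_sqrt hsq
    rwa [Real.sqrt_sq (mul_nonneg hs0 hr0), Real.sqrt_sq (by positivity)] at h
  have h2es : 2 * e * s ≤ r * (t : ℝ) * e := by
    have h9 : e * s * r ^ 2 = 2 * (e * s) := by rw [hr2]; ring
    linarith [mul_nonneg (mul_nonneg he0 hr0) (sub_nonneg.mpr hsr), h9]
  have hr15 : r ≤ 1.5 := by nlinarith [sq_nonneg (r - 1.5)]
  have h3 : (mn : ℝ) * ((t : ℝ) - 2) ≤ ((r + 0.01) * e) * ((t : ℝ) - 2) := by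
    have h10 : (0 : ℝ) ≤ e * (0.01 * (t : ℝ) - 2 * r - 2.02) := by
      apply mul_nonneg he0; linarith
    linarith [hkey, h2es, h10]
  have ht2R : (0 : ℝ) < (t : ℝ) - 2 := by linarith
  have hfin : (mn : ℝ) ≤ (r + 0.01) * e := le_of_mul_le_mul_right h3 ht2R
  rw [hm, hebar]
  exact hfin
end
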